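/- arXiv:2311.15191 — 4 statements merged into one kernel-verified Lean document; each statement's English description precedes it below -/
import Mathlib

section
/- Let M₀ be a module over the center Z(T_q) of a quantum torus T_q and M = T_q ⊗_{Z(T_q)} M₀. For a prime ideal P of T_q with P₀ = P ∩ Z(T_q), the following are equivalent: (a) P is an associated prime of M; (b) P₀ is an associated prime of M₀; (c) P = ann_{T_q}(T_q·a) for some a ∈ M. -/
/-- A quantum torus over `K` attached to a multiplicatively skew-symmetric matrix `q`:
an algebra `T` with basis `(x^α)_{α ∈ ℤⁿ}` and multiplication
`x^α x^β = d(α,β) x^{α+β}` where `d(α,β) = ∏_{i>j} q_{ij}^{α_i β_j}`. -/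
structure QuantumTorus (K : Type) [Field K] (n : ℕ) (T : Type) [Ring T] [Algebra K T] where
  q : Fin n → Fin n → Kˣ
  q_diag : ∀ i, q i i = 1
  q_skew : ∀ i j, q j i = (q i j)⁻¹
  d : (Fin n → ℤ) → (Fin n → ℤ) → Kˣ
  d_eq : ∀ α β, d α β = ∏ i : Fin n, ∏ j : Fin n,
      if (j : ℕ) < (i : ℕ) then q i j ^ (α i * β j) else 1
  x : (Fin n → ℤ) → T
  basis : Module.Basis (Fin n → ℤ) K T
  basis_eq : ∀ α, basis α = x α
  x_mul : ∀ α β, x α * x β = ((d α β : K)) • x (α + β)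
  x_zero : x 0 = 1

namespace QuantumTorus

variable {K : Type} [Field K] {n : ℕ} {T : Type} [Ring T] [Algebra K T]

/-- `α` lies in the central lattice `Γ_Z`, i.e. `x^α` is central in `T_q`. -/
def IsCentral (Q : QuantumTorus K n T) (α : Fin n → ℤ) : Prop :=
  ∀ t : T, Q.x α * t = t * Q.x α

/-- A binomial ideal: a two-sided ideal generated by nonzero elements
`λ x^α + μ x^β`. -/
def IsBinomialIdeal (Q : QuantumTorus K n T) (J : TwoSidedIdeal T) : Prop :=
  ∃ S : Set T,
    (∀ b ∈ S, b ≠ 0 ∧ ∃ (l m : K) (α β : Fin n → ℤ), b = l • Q.x α + m • Q.x β) ∧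
    J = TwoSidedIdeal.span S

/-- The scalars `c : Γ_Z → Kˣ` arising from a fixed algebra isomorphism
`φ : KΓ_Z ≅ Z(T_q)`, `φ(z_γ) = c(γ) x^γ`; the defining property is that
`γ ↦ c(γ) x^γ` is multiplicative on the central lattice and `c 0 = 1`. -/
def IsGoodC (Q : QuantumTorus K n T) (c : (Fin n → ℤ) → Kˣ) : Prop :=
  c 0 = 1 ∧ ∀ α β : Fin n → ℤ, Q.IsCentral α → Q.IsCentral β →
    (((c α : K)) • Q.x α) * (((c β : K)) • Q.x β) = ((c (α + β) : K)) • Q.x (α + β)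

/-- The binomial ideal `I(L,ρ) = ⟨ x^α - c(α)⁻¹ ρ(α) : α ∈ L ⟩`. -/
def binIdeal (Q : QuantumTorus K n T) (c : (Fin n → ℤ) → Kˣ)
    (L : AddSubgroup (Fin n → ℤ)) (ρ : L →+ Additive Kˣ) : TwoSidedIdeal T :=
  TwoSidedIdeal.span
    {t | ∃ α : L, t = Q.x (α : Fin n → ℤ) -
      ((((c (α : Fin n → ℤ))⁻¹ * Additive.toMul (ρ α) : Kˣ) : K)) • (1 : T)}

end QuantumTorus

/-- A (two-sided) prime ideal of a possibly noncommutative ring. -/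
def IsPrimeTSI {R : Type} [Ring R] (P : TwoSidedIdeal R) : Prop :=
  P ≠ ⊤ ∧ ∀ a b : R, (∀ r : R, a * r * b ∈ P) → a ∈ P ∨ b ∈ P

/-- The prime radical of a two-sided ideal: the intersection of the prime
two-sided ideals containing it. -/
def primeRadical {R : Type} [Ring R] (I : TwoSidedIdeal R) : TwoSidedIdeal R :=
  sInf {P : TwoSidedIdeal R | IsPrimeTSI P ∧ I ≤ P}

open scoped TensorProduct

/-- Associated prime of a module over a possibly noncommutative ring: a prime
two-sided ideal `P` such that the module has a nonzero submodule all of whose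
nonzero submodules have annihilator exactly `P` (a fully faithful `R/P`-module). -/
def IsAssocPrimeTSI {R : Type} [Ring R] (M : Type) [AddCommGroup M] [Module R M]
    (P : TwoSidedIdeal R) : Prop :=
  IsPrimeTSI P ∧ ∃ M' : Submodule R M, M' ≠ ⊥ ∧
    ∀ M'' : Submodule R M, M'' ≤ M' → M'' ≠ ⊥ →
      ∀ r : R, r ∈ P ↔ ∀ m ∈ M'', r • m = 0

namespace QuantumTorus

variable {K : Type} [Field K] {n : ℕ} {T : Type} [Ring T] [Algebra K T]
variable (Q : QuantumTorus K n T)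

lemma d_add_left (α β γ : Fin n → ℤ) : Q.d (α + β) γ = Q.d α γ * Q.d β γ := by
  simp only [Q.d_eq, ← Finset.prod_mul_distrib]
  refine Finset.prod_congr rfl fun i _ => ?_
  refine Finset.prod_congr rfl fun j _ => ?_
  split_ifs with h
  · rw [Pi.add_apply, add_mul, zpow_add]
  · rw [mul_one]

lemma d_add_right (α β γ : Fin n → ℤ) : Q.d α (β + γ) = Q.d α β * Q.d α γ := by
  simp only [Q.d_eq, ← Finset.prod_mul_distrib]
  refine Finset.prod_congr rfl fun i _ => ?_
  refine Finset.prod_congr rfl fun j _ => ?_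
  split_ifs with h
  · rw [Pi.add_apply, mul_add, zpow_add]
  · rw [mul_one]

lemma d_zero_left (β : Fin n → ℤ) : Q.d 0 β = 1 := by
  simp [Q.d_eq]

lemma d_zero_right (α : Fin n → ℤ) : Q.d α 0 = 1 := by
  simp [Q.d_eq]

lemma d_neg_left (α β : Fin n → ℤ) : Q.d (-α) β = (Q.d α β)⁻¹ := by
  have h : Q.d α β * Q.d (-α) β = 1 := by
    rw [← Q.d_add_left, add_neg_cancel, Q.d_zero_left]
  exact (inv_eq_of_mul_eq_one_right h).symm

lemma d_neg_right (α β : Fin n → ℤ) : Q.d α (-β) = (Q.d α β)⁻¹ := by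
  have h : Q.d α β * Q.d α (-β) = 1 := by
    rw [← Q.d_add_right, add_neg_cancel, Q.d_zero_right]
  exact (inv_eq_of_mul_eq_one_right h).symm

lemma repr_x (α : Fin n → ℤ) : Q.basis.repr (Q.x α) = Finsupp.single α 1 := by
  rw [← Q.basis_eq]; exact Q.basis.repr_self α

/-- Extensionality for `K`-linear maps out of `T` via the monomial basis. -/
lemma lhom_ext {N : Type} [AddCommGroup N] [Module K N] {f g : T →ₗ[K] N}
    (h : ∀ α, f (Q.x α) = g (Q.x α)) : f = g :=
  Q.basis.ext fun α => by rw [Q.basis_eq]; exact h α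

lemma x_ne_zero (α : Fin n → ℤ) : Q.x α ≠ 0 := by
  rw [← Q.basis_eq]; exact Q.basis.ne_zero α

lemma smul_x_inj {c c' : K} {α : Fin n → ℤ} (h : c • Q.x α = c' • Q.x α) : c = c' := by
  have h2 := congrArg (fun t => Q.basis.repr t α) h
  simpa [Q.repr_x] using h2

/-- The total expansion of `t` in monomials. -/
lemma expand (t : T) : ((Q.basis.repr t).sum fun α c => c • Q.x α) = t := by
  conv_rhs => rw [← Q.basis.linearCombination_repr t]
  rw [Finsupp.linearCombination_apply]
  exact Finsupp.sum_congr fun α _ => by rw [Q.basis_eq]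

lemma isCentral_iff (α : Fin n → ℤ) : Q.IsCentral α ↔ ∀ β, Q.d β α = Q.d α β := by
  constructor
  · intro h β
    have h1 : Q.x α * Q.x β = Q.x β * Q.x α := h (Q.x β)
    rw [Q.x_mul, Q.x_mul, add_comm β α] at h1
    exact Units.ext (Q.smul_x_inj h1.symm)
  · intro h t
    have hmaps : (LinearMap.mulLeft K (Q.x α)) = (LinearMap.mulRight K (Q.x α)) := by
      apply Q.lhom_ext
      intro β
      simp only [LinearMap.mulLeft_apply, LinearMap.mulRight_apply]
      rw [Q.x_mul, Q.x_mul, add_comm β α, h β]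
    exact LinearMap.congr_fun hmaps t

end QuantumTorus
namespace QuantumTorus

variable {K : Type} [Field K] {n : ℕ} {T : Type} [Ring T] [Algebra K T]
variable (Q : QuantumTorus K n T)

lemma repr_mul_x (t : T) (e γ : Fin n → ℤ) :
    Q.basis.repr (t * Q.x e) γ = (Q.d (γ - e) e : K) * Q.basis.repr t (γ - e) := by
  classical
  have hmaps : (Q.basis.coord γ).comp (LinearMap.mulRight K (Q.x e)) =
      (Q.d (γ - e) e : K) • Q.basis.coord (γ - e) := by
    apply Q.lhom_ext
    intro α
    simp only [LinearMap.coe_comp, Function.comp_apply, LinearMap.mulRight_apply,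
      LinearMap.smul_apply, Module.Basis.coord_apply, smul_eq_mul]
    rw [Q.x_mul, map_smul, Q.repr_x, Q.repr_x]
    simp only [Finsupp.smul_apply, Finsupp.single_apply, smul_eq_mul]
    by_cases h : γ = α + e
    · have h2 : γ - e = α := by rw [h]; abel
      rw [if_pos h.symm, if_pos h2.symm, h2]
    · have h2 : ¬ (γ - e = α) := fun hc => h (by rw [← hc]; abel)
      rw [if_neg (fun hc => h hc.symm), if_neg (fun hc => h2 hc.symm), mul_zero, mul_zero]
  simpa using LinearMap.congr_fun hmaps t

lemma repr_x_mul (t : T) (e γ : Fin n → ℤ) :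
    Q.basis.repr (Q.x e * t) γ = (Q.d e (γ - e) : K) * Q.basis.repr t (γ - e) := by
  classical
  have hmaps : (Q.basis.coord γ).comp (LinearMap.mulLeft K (Q.x e)) =
      (Q.d e (γ - e) : K) • Q.basis.coord (γ - e) := by
    apply Q.lhom_ext
    intro α
    simp only [LinearMap.coe_comp, Function.comp_apply, LinearMap.mulLeft_apply,
      LinearMap.smul_apply, Module.Basis.coord_apply, smul_eq_mul]
    rw [Q.x_mul, map_smul, Q.repr_x, Q.repr_x]
    simp only [Finsupp.smul_apply, Finsupp.single_apply, smul_eq_mul]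
    by_cases h : γ = e + α
    · have h2 : γ - e = α := by rw [h]; abel
      rw [if_pos h.symm, if_pos h2.symm, h2]
    · have h2 : ¬ (γ - e = α) := fun hc => h (by rw [← hc]; abel)
      rw [if_neg (fun hc => h hc.symm), if_neg (fun hc => h2 hc.symm), mul_zero, mul_zero]
  simpa using LinearMap.congr_fun hmaps t

lemma mem_center_iff_repr (t : T) :
    t ∈ Set.center T ↔ ∀ α ∈ (Q.basis.repr t).support, Q.IsCentral α := by
  constructor
  · intro h α hα
    rw [Q.isCentral_iff]
    intro β
    have h1 : Q.x β * t = t * Q.x β := Semigroup.mem_center_iff.mp h (Q.x β)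
    have h2 := congrArg (fun s => Q.basis.repr s (β + α)) h1
    rw [Q.repr_x_mul, Q.repr_mul_x] at h2
    have h3 : β + α - β = α := by abel
    rw [h3] at h2
    have hne : Q.basis.repr t α ≠ 0 := Finsupp.mem_support_iff.mp hα
    exact Units.ext (mul_right_cancel₀ hne h2)
  · intro h
    rw [Semigroup.mem_center_iff]
    intro g
    have ht := Q.expand t
    calc g * t = g * ((Q.basis.repr t).sum fun α c => c • Q.x α) := by rw [ht]
      _ = (Q.basis.repr t).sum fun α c => g * (c • Q.x α) := by
          rw [Finsupp.sum, Finsupp.sum, Finset.mul_sum]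
      _ = (Q.basis.repr t).sum fun α c => (c • Q.x α) * g := by
          refine Finsupp.sum_congr fun α hα => ?_
          rw [mul_smul_comm, smul_mul_assoc, h α hα g]
      _ = ((Q.basis.repr t).sum fun α c => c • Q.x α) * g := by
          rw [Finsupp.sum, Finsupp.sum, Finset.sum_mul]
      _ = t * g := by rw [ht]

/-- The central lattice `Γ_Z` as an additive subgroup of `ℤⁿ`. -/
def gammaZ : AddSubgroup (Fin n → ℤ) where
  carrier := {α | Q.IsCentral α}
  zero_mem' := by
    rw [Set.mem_setOf_eq, Q.isCentral_iff]
    intro β; rw [Q.d_zero_left, Q.d_zero_right]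
  add_mem' := by
    intro a b ha hb
    rw [Set.mem_setOf_eq, Q.isCentral_iff] at *
    intro β
    rw [Q.d_add_right, Q.d_add_left, ha β, hb β]
  neg_mem' := by
    intro a ha
    rw [Set.mem_setOf_eq, Q.isCentral_iff] at *
    intro β
    rw [Q.d_neg_right, Q.d_neg_left, ha β]

lemma mem_gammaZ_iff (α : Fin n → ℤ) : α ∈ Q.gammaZ ↔ Q.IsCentral α := Iff.rfl

/-- The coset of `α` in `ℤⁿ/Γ_Z`. -/
def toV (α : Fin n → ℤ) : (Fin n → ℤ) ⧸ Q.gammaZ := QuotientAddGroup.mk α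

lemma toV_eq_iff (α β : Fin n → ℤ) : Q.toV α = Q.toV β ↔ α - β ∈ Q.gammaZ := by
  rw [toV, toV, QuotientAddGroup.eq]
  constructor
  · intro h; have := Q.gammaZ.neg_mem h; simpa [neg_add_rev, sub_eq_add_neg, add_comm] using this
  · intro h; have := Q.gammaZ.neg_mem h; simpa [sub_eq_add_neg, neg_add_rev, add_comm] using this

/-- A transversal (section) of `Γ_Z` in `ℤⁿ`, sending `0` to `0`. -/
noncomputable def sec (v : (Fin n → ℤ) ⧸ Q.gammaZ) : Fin n → ℤ :=
  by classical exact if v = 0 then 0 else Quotient.out v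

lemma toV_sec (v : (Fin n → ℤ) ⧸ Q.gammaZ) : Q.toV (Q.sec v) = v := by
  rw [sec]
  split_ifs with h
  · rw [h, toV]; rfl
  · exact Quotient.out_eq v

lemma sec_zero : Q.sec 0 = 0 := by rw [sec]; simp

end QuantumTorus
namespace QuantumTorus

variable {K : Type} [Field K] {n : ℕ} {T : Type} [Ring T] [Algebra K T]
variable (Q : QuantumTorus K n T)

open scoped Classical

/-- The commutation character `s(β,α) = d(β,α)/d(α,β)`. -/
def sChar (β α : Fin n → ℤ) : Kˣ := Q.d β α * (Q.d α β)⁻¹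

lemma sChar_add_right (β α γ : Fin n → ℤ) :
    Q.sChar β (α + γ) = Q.sChar β α * Q.sChar β γ := by
  rw [sChar, sChar, sChar, Q.d_add_right, Q.d_add_left, mul_inv]
  exact mul_mul_mul_comm _ _ _ _

lemma sChar_one_of_central {α : Fin n → ℤ} (h : Q.IsCentral α) (β : Fin n → ℤ) :
    Q.sChar β α = 1 := by
  rw [sChar, (Q.isCentral_iff α).mp h β, mul_inv_cancel]

lemma sChar_congr {α α' : Fin n → ℤ} (β : Fin n → ℤ) (h : Q.toV α = Q.toV α') :
    Q.sChar β α = Q.sChar β α' := by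
  have hm : α - α' ∈ Q.gammaZ := (Q.toV_eq_iff α α').mp h
  have : Q.sChar β α = Q.sChar β (α' + (α - α')) := by rw [show α' + (α - α') = α by abel]
  rw [this, Q.sChar_add_right, Q.sChar_one_of_central hm β, mul_one]

lemma exists_sChar_ne_one {α : Fin n → ℤ} (h : ¬ Q.IsCentral α) :
    ∃ β, Q.sChar β α ≠ 1 := by
  by_contra hc
  push_neg at hc
  apply h
  rw [Q.isCentral_iff]
  intro β
  have := hc β
  rw [sChar, mul_inv_eq_one] at this
  exact this

/-- The component of `t` supported on the coset `v` of `Γ_Z`. -/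
noncomputable def comp (v : (Fin n → ℤ) ⧸ Q.gammaZ) : T →ₗ[K] T :=
  (Finsupp.linearCombination K fun α => if Q.toV α = v then Q.x α else 0) ∘ₗ
    (Q.basis.repr : T ≃ₗ[K] ((Fin n → ℤ) →₀ K)).toLinearMap

lemma comp_x (v : (Fin n → ℤ) ⧸ Q.gammaZ) (α : Fin n → ℤ) :
    Q.comp v (Q.x α) = if Q.toV α = v then Q.x α else 0 := by
  rw [comp]
  simp [Q.repr_x, Finsupp.linearCombination_single]

lemma repr_comp (v : (Fin n → ℤ) ⧸ Q.gammaZ) (t : T) (γ : Fin n → ℤ) :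
    Q.basis.repr (Q.comp v t) γ = if Q.toV γ = v then Q.basis.repr t γ else 0 := by
  classical
  have hmaps : (Q.basis.coord γ).comp (Q.comp v) =
      (if Q.toV γ = v then Q.basis.coord γ else 0) := by
    apply Q.lhom_ext
    intro α
    simp only [LinearMap.coe_comp, Function.comp_apply, Module.Basis.coord_apply]
    rw [Q.comp_x]
    by_cases hαγ : α = γ
    · subst hαγ
      split_ifs with h1 <;> simp [Q.repr_x]
    · split_ifs with h1 h2 <;>
        simp [Q.repr_x, Finsupp.single_apply, hαγ, map_zero]
  have := LinearMap.congr_fun hmaps t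
  simp only [LinearMap.coe_comp, Function.comp_apply, Module.Basis.coord_apply] at this
  split_ifs at this ⊢ with h
  · exact this
  · simpa using this

/-- The (finite) set of cosets appearing in `t`. -/
noncomputable def cosetSupp (t : T) : Finset ((Fin n → ℤ) ⧸ Q.gammaZ) :=
  (Q.basis.repr t).support.image Q.toV

lemma comp_sum (t : T) : ∑ v ∈ Q.cosetSupp t, Q.comp v t = t := by
  have hc : ∀ v, Q.comp v t =
      ∑ α ∈ (Q.basis.repr t).support,
        (if Q.toV α = v then Q.basis.repr t α • Q.x α else 0) := by
    intro v
    rw [comp]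
    simp only [LinearMap.coe_comp, Function.comp_apply, LinearEquiv.coe_coe,
      Finsupp.linearCombination_apply]
    rw [Finsupp.sum]
    refine Finset.sum_congr rfl fun α _ => ?_
    split_ifs with h <;> simp
  rw [Finset.sum_congr rfl fun v _ => hc v, Finset.sum_comm]
  have : ∀ α ∈ (Q.basis.repr t).support,
      (∑ v ∈ Q.cosetSupp t, if Q.toV α = v then Q.basis.repr t α • Q.x α else 0)
        = Q.basis.repr t α • Q.x α := by
    intro α hα
    rw [Finset.sum_ite_eq (Q.cosetSupp t) (Q.toV α) (fun _ => Q.basis.repr t α • Q.x α)]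
    rw [if_pos]
    exact Finset.mem_image_of_mem Q.toV hα
  rw [Finset.sum_congr rfl this]
  exact Q.expand t

lemma comp_eq_self_of (v : (Fin n → ℤ) ⧸ Q.gammaZ) (t : T)
    (h : ∀ γ ∈ (Q.basis.repr t).support, Q.toV γ = v) : Q.comp v t = t := by
  apply Q.basis.repr.injective
  ext γ
  rw [Q.repr_comp]
  by_cases hγ : Q.basis.repr t γ = 0
  · rw [hγ]; split_ifs <;> rfl
  · rw [if_pos (h γ (Finsupp.mem_support_iff.mpr hγ))]

lemma comp_eq_zero_of (v w : (Fin n → ℤ) ⧸ Q.gammaZ) (t : T)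
    (h : ∀ γ ∈ (Q.basis.repr t).support, Q.toV γ = v) (hw : w ≠ v) : Q.comp w t = 0 := by
  apply Q.basis.repr.injective
  ext γ
  rw [Q.repr_comp, map_zero]
  by_cases hγ : Q.basis.repr t γ = 0
  · rw [hγ]; split_ifs <;> rfl
  · rw [if_neg]
    · rfl
    · rw [h γ (Finsupp.mem_support_iff.mpr hγ)]; exact fun hc => hw hc.symm

lemma comp_eq_zero_of_not_mem (v : (Fin n → ℤ) ⧸ Q.gammaZ) (t : T)
    (h : v ∉ Q.cosetSupp t) : Q.comp v t = 0 := by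
  apply Q.basis.repr.injective
  ext γ
  rw [Q.repr_comp, map_zero]
  by_cases hγ : Q.basis.repr t γ = 0
  · rw [hγ]; split_ifs <;> rfl
  · rw [if_neg]
    · rfl
    · intro hc
      exact h (hc ▸ Finset.mem_image_of_mem Q.toV (Finsupp.mem_support_iff.mpr hγ))

/-- The inverse of the monomial `x^e`. -/
noncomputable def xinv (e : Fin n → ℤ) : T := (((Q.d e (-e))⁻¹ : Kˣ) : K) • Q.x (-e)

lemma x_mul_xinv (e : Fin n → ℤ) : Q.x e * Q.xinv e = 1 := by
  rw [xinv, mul_smul_comm, Q.x_mul, add_neg_cancel, Q.x_zero, smul_smul]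
  norm_cast
  rw [inv_mul_cancel]
  simp

lemma xinv_mul_x (e : Fin n → ℤ) : Q.xinv e * Q.x e = 1 := by
  rw [xinv, smul_mul_assoc, Q.x_mul, neg_add_cancel, Q.x_zero, smul_smul,
    Q.d_neg_right, Q.d_neg_left]
  norm_cast
  simp

end QuantumTorus
namespace QuantumTorus

variable {K : Type} [Field K] {n : ℕ} {T : Type} [Ring T] [Algebra K T]
variable (Q : QuantumTorus K n T)

open scoped Classical

lemma repr_conj (β : Fin n → ℤ) (t : T) (γ : Fin n → ℤ) :
    Q.basis.repr (Q.x β * t * Q.x (-β)) γ =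
      ((Q.sChar β γ * Q.d β (-β) : Kˣ) : K) * Q.basis.repr t γ := by
  rw [Q.repr_mul_x, Q.repr_x_mul]
  rw [show γ - -β = γ + β by abel, show γ + β - β = γ by abel]
  have hu : Q.d γ (-β) * Q.d β (-β) * Q.d β γ = Q.sChar β γ * Q.d β (-β) := by
    rw [sChar, Q.d_neg_right, Q.d_neg_right]
    exact (mul_rotate (Q.d β γ) (Q.d γ β)⁻¹ (Q.d β β)⁻¹).symm
  rw [Q.d_add_left, ← mul_assoc]
  norm_cast
  rw [hu]

lemma toV_of_mem_supp_central_mul {c : T} (hc : c ∈ Set.center T) (e γ : Fin n → ℤ)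
    (hγ : γ ∈ (Q.basis.repr (c * Q.x e)).support) : Q.toV γ = Q.toV e := by
  rw [Finsupp.mem_support_iff, Q.repr_mul_x] at hγ
  have h1 : Q.basis.repr c (γ - e) ≠ 0 := fun h => hγ (by rw [h, mul_zero])
  have h2 : Q.IsCentral (γ - e) :=
    (Q.mem_center_iff_repr c).mp hc _ (Finsupp.mem_support_iff.mpr h1)
  exact (Q.toV_eq_iff γ e).mpr h2

lemma comp_mem (I : Set T) (h0 : (0 : T) ∈ I)
    (hadd : ∀ {a b : T}, a ∈ I → b ∈ I → a + b ∈ I)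
    (hL : ∀ (s : T) {a : T}, a ∈ I → s * a ∈ I)
    (hR : ∀ (s : T) {a : T}, a ∈ I → a * s ∈ I) :
    ∀ t ∈ I, ∀ v, Q.comp v t ∈ I := by
  have hsmul : ∀ (c : K) {a : T}, a ∈ I → c • a ∈ I := by
    intro c a ha; rw [Algebra.smul_def]; exact hL _ ha
  have hsub : ∀ {a b : T}, a ∈ I → b ∈ I → a - b ∈ I := by
    intro a b ha hb
    rw [sub_eq_add_neg, ← neg_one_smul K b]
    exact hadd ha (hsmul _ hb)
  suffices H : ∀ (k : ℕ) (t : T), t ∈ I → (Q.cosetSupp t).card ≤ k → ∀ v, Q.comp v t ∈ I by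
    intro t ht v; exact H (Q.cosetSupp t).card t ht le_rfl v
  intro k
  induction k with
  | zero =>
    intro t ht hcard v
    have h1 : Q.cosetSupp t = ∅ := Finset.card_eq_zero.mp (Nat.le_zero.mp hcard)
    have h2 : (Q.basis.repr t).support = ∅ := Finset.image_eq_empty.mp h1
    have h3 : t = 0 := by
      apply Q.basis.repr.injective
      rw [map_zero]
      exact Finsupp.support_eq_empty.mp h2
    rw [h3, map_zero]; exact h0
  | succ k IH =>
    intro t ht hcard v
    by_cases hone : ∀ γ ∈ (Q.basis.repr t).support, Q.toV γ = v
    · rw [Q.comp_eq_self_of v t hone]; exact ht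
    push_neg at hone
    obtain ⟨γ₀, hγ₀mem, hγ₀ne⟩ := hone
    by_cases hv : v ∈ Q.cosetSupp t
    swap
    · rw [Q.comp_eq_zero_of_not_mem v t hv]; exact h0
    obtain ⟨a, hamem, ha⟩ := Finset.mem_image.mp hv
    have hnc : ¬ Q.IsCentral (γ₀ - a) := by
      intro hc
      exact hγ₀ne (by rw [← ha]; exact (Q.toV_eq_iff γ₀ a).mpr hc)
    obtain ⟨β, hβ⟩ := Q.exists_sChar_ne_one hnc
    have hdecomp : Q.sChar β γ₀ = Q.sChar β a * Q.sChar β (γ₀ - a) := by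
      rw [← Q.sChar_add_right, show a + (γ₀ - a) = γ₀ by abel]
    have hsep : Q.sChar β γ₀ ≠ Q.sChar β a := by
      intro hcc
      rw [hcc] at hdecomp
      exact hβ (left_eq_mul.mp hdecomp)
    set u : T := Q.x β * t * Q.x (-β) - (((Q.sChar β γ₀ * Q.d β (-β) : Kˣ) : K)) • t with hu_def
    have hrepr_u : ∀ γ, Q.basis.repr u γ =
        ((Q.sChar β γ : K) - (Q.sChar β γ₀ : K)) * (Q.d β (-β) : K) * Q.basis.repr t γ := by
      intro γ
      rw [hu_def, map_sub, Finsupp.sub_apply, Q.repr_conj, map_smul, Finsupp.smul_apply,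
        smul_eq_mul]
      push_cast
      ring
    have hu_mem : u ∈ I := hsub (hR _ (hL _ ht)) (hsmul _ ht)
    have hsupp : (Q.basis.repr u).support ⊆ (Q.basis.repr t).support := by
      intro γ hγ
      rw [Finsupp.mem_support_iff] at hγ ⊢
      intro hz
      exact hγ (by rw [hrepr_u, hz, mul_zero])
    have hv' : Q.toV γ₀ ∉ Q.cosetSupp u := by
      intro hmem
      obtain ⟨γ, hγmem, hγ⟩ := Finset.mem_image.mp hmem
      have : Q.sChar β γ = Q.sChar β γ₀ := Q.sChar_congr β hγ
      have hz : Q.basis.repr u γ = 0 := by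
        rw [hrepr_u, this, sub_self, zero_mul, zero_mul]
      exact Finsupp.mem_support_iff.mp hγmem hz
    have hsubset : Q.cosetSupp u ⊆ (Q.cosetSupp t).erase (Q.toV γ₀) := by
      intro w hw
      rw [Finset.mem_erase]
      exact ⟨fun hc => hv' (hc ▸ hw), Finset.image_subset_image hsupp hw⟩
    have hγ₀v : Q.toV γ₀ ∈ Q.cosetSupp t := Finset.mem_image_of_mem Q.toV hγ₀mem
    have hcard_u : (Q.cosetSupp u).card ≤ k := by
      have h1 := Finset.card_le_card hsubset
      rw [Finset.card_erase_of_mem hγ₀v] at h1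
      omega
    have hIH := IH u hu_mem hcard_u v
    set cv : K := ((Q.sChar β a : K) - (Q.sChar β γ₀ : K)) * (Q.d β (-β) : K) with hcv_def
    have hcompu : Q.comp v u = cv • Q.comp v t := by
      apply Q.basis.repr.injective
      ext γ
      rw [Q.repr_comp, map_smul, Finsupp.smul_apply, Q.repr_comp, smul_eq_mul]
      by_cases hγv : Q.toV γ = v
      · rw [if_pos hγv, if_pos hγv, hrepr_u]
        have hse : Q.sChar β γ = Q.sChar β a := Q.sChar_congr β (hγv.trans ha.symm)
        rw [hse, hcv_def]
      · rw [if_neg hγv, if_neg hγv, mul_zero]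
    have hcvne : cv ≠ 0 := by
      apply mul_ne_zero
      · exact sub_ne_zero.mpr (fun h => hsep (Units.ext h.symm))
      · exact Units.ne_zero _
    have : Q.comp v t = cv⁻¹ • Q.comp v u := by
      rw [hcompu, smul_smul, inv_mul_cancel₀ hcvne, one_smul]
    rw [this]
    exact hsmul _ hIH

variable {Z : Type} [CommRing Z] [Algebra Z T]

lemma comp_factor (hcen : Set.range (algebraMap Z T) = Set.center T)
    (v : (Fin n → ℤ) ⧸ Q.gammaZ) (t : T) :
    ∃ z : Z, Q.comp v t = algebraMap Z T z * Q.x (Q.sec v) ∧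
      algebraMap Z T z = Q.comp v t * Q.xinv (Q.sec v) := by
  have hcent : Q.comp v t * Q.xinv (Q.sec v) ∈ Set.center T := by
    rw [Q.mem_center_iff_repr]
    intro γ hγ
    rw [xinv, mul_smul_comm] at hγ
    rw [Finsupp.mem_support_iff, map_smul, Finsupp.smul_apply, smul_eq_mul,
      Q.repr_mul_x] at hγ
    have h1 : Q.basis.repr (Q.comp v t) (γ - -Q.sec v) ≠ 0 := by
      intro h; exact hγ (by rw [h, mul_zero, mul_zero])
    rw [Q.repr_comp] at h1
    have h2 : Q.toV (γ - -Q.sec v) = v := by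
      by_contra hc; exact h1 (if_neg hc)
    have h3 : (γ - -Q.sec v) - Q.sec v ∈ Q.gammaZ :=
      (Q.toV_eq_iff _ _).mp (h2.trans (Q.toV_sec v).symm)
    have h4 : γ ∈ Q.gammaZ := by
      have : (γ - -Q.sec v) - Q.sec v = γ := by abel
      rwa [this] at h3
    exact h4
  rw [← hcen] at hcent
  obtain ⟨z, hz⟩ := hcent
  refine ⟨z, ?_, hz⟩
  rw [hz, mul_assoc, Q.xinv_mul_x, mul_one]

lemma ideal_decomp (hcen : Set.range (algebraMap Z T) = Set.center T)
    (I : Set T) (h0 : (0 : T) ∈ I)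
    (hadd : ∀ {a b : T}, a ∈ I → b ∈ I → a + b ∈ I)
    (hL : ∀ (s : T) {a : T}, a ∈ I → s * a ∈ I)
    (hR : ∀ (s : T) {a : T}, a ∈ I → a * s ∈ I)
    {t : T} (ht : t ∈ I) :
    ∃ (F : Finset ((Fin n → ℤ) ⧸ Q.gammaZ)) (g : ((Fin n → ℤ) ⧸ Q.gammaZ) → Z),
      (∀ v ∈ F, algebraMap Z T (g v) ∈ I) ∧
      t = ∑ v ∈ F, algebraMap Z T (g v) * Q.x (Q.sec v) := by
  choose z hz1 hz2 using Q.comp_factor (Z := Z) hcen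
  refine ⟨Q.cosetSupp t, fun v => z v t, ?_, ?_⟩
  · intro v _
    rw [hz2]
    exact hR _ (Q.comp_mem I h0 hadd hL hR t ht v)
  · conv_lhs => rw [← Q.comp_sum t]
    exact Finset.sum_congr rfl fun v _ => hz1 v t

end QuantumTorus
namespace QuantumTorus

variable {K : Type} [Field K] {n : ℕ} {T : Type} [Ring T] [Algebra K T]
variable (Q : QuantumTorus K n T)
variable {Z : Type} [CommRing Z] [Algebra Z T]

open scoped Classical

lemma comp_central_mul_x (hcen : Set.range (algebraMap Z T) = Set.center T)
    (z : Z) (v w : (Fin n → ℤ) ⧸ Q.gammaZ) :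
    Q.comp w (algebraMap Z T z * Q.x (Q.sec v)) =
      if v = w then algebraMap Z T z * Q.x (Q.sec v) else 0 := by
  have hc : algebraMap Z T z ∈ Set.center T := hcen ▸ Set.mem_range_self z
  have hsupp : ∀ γ ∈ (Q.basis.repr (algebraMap Z T z * Q.x (Q.sec v))).support,
      Q.toV γ = v := by
    intro γ hγ
    rw [Q.toV_of_mem_supp_central_mul hc (Q.sec v) γ hγ, Q.toV_sec]
  split_ifs with h
  · exact h ▸ Q.comp_eq_self_of v _ hsupp
  · exact Q.comp_eq_zero_of v w _ hsupp (fun hc2 => h hc2.symm)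

noncomputable def zBasis (hinj : Function.Injective (algebraMap Z T))
    (hcen : Set.range (algebraMap Z T) = Set.center T) :
    Module.Basis ((Fin n → ℤ) ⧸ Q.gammaZ) Z T := by
  refine Module.Basis.mk (v := fun v => Q.x (Q.sec v)) ?_ ?_
  · rw [linearIndependent_iff]
    intro l hl
    ext w
    have h1 : Q.comp w (Finsupp.linearCombination Z (fun v => Q.x (Q.sec v)) l) = 0 := by
      rw [hl, map_zero]
    rw [Finsupp.linearCombination_apply, map_finsuppSum] at h1
    have h2 : ∀ v ∈ l.support, Q.comp w (l v • Q.x (Q.sec v)) =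
        if v = w then algebraMap Z T (l v) * Q.x (Q.sec v) else 0 := by
      intro v _
      rw [Algebra.smul_def, Q.comp_central_mul_x hcen]
    rw [Finsupp.sum_congr
      (g2 := fun v z => if v = w then algebraMap Z T z * Q.x (Q.sec v) else 0) h2] at h1
    rw [show (fun v z => if v = w then algebraMap Z T z * Q.x (Q.sec v) else 0)
        = (fun v z => if v = w then algebraMap Z T z * Q.x (Q.sec w) else 0) by
      funext v z; split_ifs with hvw <;> [rw [hvw]; rfl]] at h1
    rw [Finsupp.sum_ite_eq' l w (fun v z => algebraMap Z T z * Q.x (Q.sec w))] at h1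
    by_cases hw : w ∈ l.support
    · rw [if_pos hw] at h1
      have h5 : algebraMap Z T (l w) = 0 := by
        have := congrArg (fun t => t * Q.xinv (Q.sec w)) h1
        simpa [mul_assoc, Q.x_mul_xinv] using this
      rw [show (0 : T) = algebraMap Z T 0 by rw [map_zero]] at h5
      exact hinj h5
    · exact Finsupp.notMem_support_iff.mp hw
  · rintro t -
    rw [← Q.comp_sum t]
    apply Submodule.sum_mem
    intro v _
    obtain ⟨z, hz1, -⟩ := Q.comp_factor (Z := Z) hcen v t
    rw [hz1, ← Algebra.smul_def]
    exact Submodule.smul_mem _ _ (Submodule.subset_span ⟨v, rfl⟩)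

lemma zBasis_apply (hinj : Function.Injective (algebraMap Z T))
    (hcen : Set.range (algebraMap Z T) = Set.center T)
    (v : (Fin n → ℤ) ⧸ Q.gammaZ) : Q.zBasis hinj hcen v = Q.x (Q.sec v) := by
  rw [zBasis, Module.Basis.mk_apply]

lemma zBasis_repr_one (hinj : Function.Injective (algebraMap Z T))
    (hcen : Set.range (algebraMap Z T) = Set.center T) :
    (Q.zBasis hinj hcen).repr 1 = Finsupp.single 0 1 := by
  have h : (1 : T) = Q.zBasis hinj hcen 0 := by
    rw [Q.zBasis_apply, Q.sec_zero, Q.x_zero]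
  rw [h, Module.Basis.repr_self]

end QuantumTorus
section MainAux

open scoped TensorProduct
open scoped Classical

variable {K : Type} [Field K] {n : ℕ} {T : Type} [Ring T] [Algebra K T]
variable (Q : QuantumTorus K n T)
variable {Z : Type} [CommRing Z] [Algebra Z T]
variable (hinj : Function.Injective (algebraMap Z T))
variable (hcen : Set.range (algebraMap Z T) = Set.center T)
variable (M₀ : Type) [AddCommGroup M₀] [Module Z M₀]

/-- The `Z`-linear identification `T ⊗[Z] M₀ ≃ ⊕_{cosets} M₀`. -/
noncomputable def tEquiv : (T ⊗[Z] M₀) ≃ₗ[Z] (((Fin n → ℤ) ⧸ Q.gammaZ) →₀ M₀) :=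
  (TensorProduct.congr ((Q.zBasis hinj hcen).repr) (LinearEquiv.refl Z M₀)).trans
    (TensorProduct.finsuppScalarLeft Z M₀ _)

lemma tEquiv_tmul_apply (t : T) (m : M₀) (v : (Fin n → ℤ) ⧸ Q.gammaZ) :
    tEquiv Q hinj hcen M₀ (t ⊗ₜ[Z] m) v = ((Q.zBasis hinj hcen).repr t v) • m := by
  rw [tEquiv]
  simp [TensorProduct.finsuppScalarLeft_apply_tmul_apply]

lemma algebraMap_smul_eq (z : Z) (u : T ⊗[Z] M₀) : (algebraMap Z T z) • u = z • u := by
  induction u using TensorProduct.induction_on with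
  | zero => rw [smul_zero, smul_zero]
  | tmul t m =>
      rw [TensorProduct.smul_tmul', TensorProduct.smul_tmul', smul_eq_mul, Algebra.smul_def]
  | add x y hx hy => rw [smul_add, smul_add, hx, hy]

variable {P : TwoSidedIdeal T} {P₀ : TwoSidedIdeal Z}

lemma one_not_mem_P₀ (hP : IsPrimeTSI P)
    (hP₀ : ∀ z : Z, z ∈ P₀ ↔ algebraMap Z T z ∈ P) : (1 : Z) ∉ P₀ := by
  intro h
  exact hP.1 (P.one_mem_iff.mp (by simpa using (hP₀ 1).mp h))

lemma prime_P₀ (hcen : Set.range (algebraMap Z T) = Set.center T) (hP : IsPrimeTSI P)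
    (hP₀ : ∀ z : Z, z ∈ P₀ ↔ algebraMap Z T z ∈ P) : IsPrimeTSI P₀ := by
  constructor
  · intro h
    exact one_not_mem_P₀ hP hP₀ (h ▸ TwoSidedIdeal.mem_top Z)
  · intro a b h
    have hab : a * b ∈ P₀ := by simpa using h 1
    have hcomm : algebraMap Z T a * (1 : T) = (1 : T) * algebraMap Z T a := by simp
    have hkey : ∀ r : T, algebraMap Z T a * r * algebraMap Z T b ∈ P := by
      intro r
      have hc : algebraMap Z T a * r = r * algebraMap Z T a :=
        (Semigroup.mem_center_iff.mp (hcen ▸ Set.mem_range_self a) r).symm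
      rw [hc, mul_assoc, ← map_mul]
      exact P.mul_mem_left r _ ((hP₀ _).mp hab)
    rcases hP.2 _ _ hkey with h' | h'
    · exact Or.inl ((hP₀ a).mpr h')
    · exact Or.inr ((hP₀ b).mpr h')

lemma mul_cases_P₀ (hp₀ : IsPrimeTSI P₀) (a b : Z) (hab : a * b ∈ P₀) :
    a ∈ P₀ ∨ b ∈ P₀ := by
  refine hp₀.2 a b fun r => ?_
  rw [show a * r * b = r * (a * b) by ring]
  exact P₀.mul_mem_left _ _ hab

end MainAux
section MainAux2

open scoped TensorProduct Classical

variable {K : Type} [Field K] {n : ℕ} {T : Type} [Ring T] [Algebra K T]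
variable {Z : Type} [CommRing Z] [Algebra Z T]
variable {M₀ : Type} [AddCommGroup M₀] [Module Z M₀]

lemma exists_ann_eq (Q : QuantumTorus K n T)
    (hinj : Function.Injective (algebraMap Z T))
    (hcen : Set.range (algebraMap Z T) = Set.center T)
    {P₀ : TwoSidedIdeal Z} (hp₀ : IsPrimeTSI P₀)
    {u : T ⊗[Z] M₀} (hu0 : u ≠ 0) (hu : ∀ z : Z, z ∈ P₀ ↔ z • u = 0) :
    ∃ m₀ : M₀, m₀ ≠ 0 ∧ ∀ z : Z, z ∈ P₀ ↔ z • m₀ = 0 := by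
  set E := tEquiv Q hinj hcen M₀ with hE
  set f := E u with hf
  have hf0 : f ≠ 0 := fun h => hu0 (E.map_eq_zero_iff.mp h)
  have hcoord : ∀ z : Z, (z • u = 0 ↔ ∀ v, z • f v = 0) := by
    intro z
    rw [← LinearEquiv.map_eq_zero_iff E, map_smul]
    constructor
    · intro h v
      have := congrArg (fun g => g v) h
      simpa using this
    · intro h
      ext v
      simpa using h v
  have hone : (1 : Z) ∉ P₀ := fun h1 => hp₀.1 (P₀.one_mem_iff.mp h1)
  have hxsupp : ∃ v ∈ f.support, ∀ z : Z, z • f v = 0 → z ∈ P₀ := by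
    by_contra hcon
    push_neg at hcon
    choose zf hzf1 hzf2 using hcon
    set zz : Z := ∏ v ∈ f.support.attach, zf v.1 v.2 with hzz
    have hzzkill : ∀ v ∈ f.support, zz • f v = 0 := by
      intro v hv
      have hsplit : zz = (∏ w ∈ f.support.attach.erase ⟨v, hv⟩, zf w.1 w.2) * zf v hv := by
        rw [hzz, ← Finset.prod_erase_mul f.support.attach _ (Finset.mem_attach _ ⟨v, hv⟩)]
      rw [hsplit, mul_smul, hzf1 v hv, smul_zero]
    have hzzmem : zz ∈ P₀ := (hu zz).mpr ((hcoord zz).mpr (fun v => by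
      by_cases hv : v ∈ f.support
      · exact hzzkill v hv
      · rw [Finsupp.notMem_support_iff.mp hv, smul_zero]))
    have hzznot : zz ∉ P₀ := by
      rw [hzz]
      refine Finset.prod_induction _ (· ∉ P₀) ?_ hone ?_
      · intro a b ha hb hab
        rcases mul_cases_P₀ hp₀ a b hab with h | h
        · exact ha h
        · exact hb h
      · intro v _
        exact hzf2 v.1 v.2
    exact hzznot hzzmem
  obtain ⟨v, hv, hann⟩ := hxsupp
  refine ⟨f v, Finsupp.mem_support_iff.mp hv, fun z => ⟨fun hz => ?_, hann z⟩⟩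
  exact (hcoord z).mp ((hu z).mp hz) v

lemma ann_from_assoc (Q : QuantumTorus K n T)
    (hinj : Function.Injective (algebraMap Z T))
    (hcen : Set.range (algebraMap Z T) = Set.center T)
    {P : TwoSidedIdeal T} {P₀ : TwoSidedIdeal Z}
    (hP₀ : ∀ z : Z, z ∈ P₀ ↔ algebraMap Z T z ∈ P)
    (hA : IsAssocPrimeTSI (T ⊗[Z] M₀) P) :
    ∃ u : T ⊗[Z] M₀, u ≠ 0 ∧ ∀ z : Z, z ∈ P₀ ↔ z • u = 0 := by
  obtain ⟨-, M', hM'ne, hM'⟩ := hA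
  obtain ⟨u, huM', hu0⟩ := (Submodule.ne_bot_iff M').mp hM'ne
  have hspan_le : Submodule.span T {u} ≤ M' :=
    (Submodule.span_le).mpr (Set.singleton_subset_iff.mpr huM')
  have hspan_ne : Submodule.span T {u} ≠ ⊥ := fun h =>
    hu0 ((Submodule.eq_bot_iff _).mp h u (Submodule.mem_span_singleton_self u))
  have hiff := hM' (Submodule.span T {u}) hspan_le hspan_ne
  refine ⟨u, hu0, fun z => ?_⟩
  rw [hP₀ z, hiff (algebraMap Z T z)]
  constructor
  · intro h
    rw [← algebraMap_smul_eq]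
    exact h u (Submodule.mem_span_singleton_self u)
  · intro h m hm
    obtain ⟨s, rfl⟩ := Submodule.mem_span_singleton.mp hm
    have hcm : algebraMap Z T z * s = s * algebraMap Z T z :=
      (Semigroup.mem_center_iff.mp (hcen ▸ Set.mem_range_self z) s).symm
    rw [smul_smul, hcm, ← smul_smul, algebraMap_smul_eq, h, smul_zero]

lemma ann_from_c (Q : QuantumTorus K n T)
    (hinj : Function.Injective (algebraMap Z T))
    (hcen : Set.range (algebraMap Z T) = Set.center T)
    {P : TwoSidedIdeal T} (hP : IsPrimeTSI P) {P₀ : TwoSidedIdeal Z}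
    (hP₀ : ∀ z : Z, z ∈ P₀ ↔ algebraMap Z T z ∈ P)
    {a : T ⊗[Z] M₀} (hc : ∀ r : T, r ∈ P ↔ ∀ s : T, r • s • a = 0) :
    ∃ u : T ⊗[Z] M₀, u ≠ 0 ∧ ∀ z : Z, z ∈ P₀ ↔ z • u = 0 := by
  have ha0 : a ≠ 0 := by
    intro h
    exact hP.1 (P.one_mem_iff.mp ((hc 1).mpr (fun s => by rw [h, smul_zero, smul_zero])))
  refine ⟨a, ha0, fun z => ?_⟩
  rw [hP₀ z, hc (algebraMap Z T z)]
  constructor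
  · intro h
    have h1 := h 1
    rw [one_smul] at h1
    rw [← algebraMap_smul_eq]
    exact h1
  · intro h s
    have hcm : algebraMap Z T z * s = s * algebraMap Z T z :=
      (Semigroup.mem_center_iff.mp (hcen ▸ Set.mem_range_self z) s).symm
    rw [smul_smul, hcm, ← smul_smul, algebraMap_smul_eq, h, smul_zero]

lemma assoc_of_ann (Q : QuantumTorus K n T)
    (hinj : Function.Injective (algebraMap Z T))
    (hcen : Set.range (algebraMap Z T) = Set.center T)
    {P : TwoSidedIdeal T} (hP : IsPrimeTSI P) {P₀ : TwoSidedIdeal Z}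
    (hP₀ : ∀ z : Z, z ∈ P₀ ↔ algebraMap Z T z ∈ P) (hp₀ : IsPrimeTSI P₀)
    {m₀ : M₀} (hm0 : m₀ ≠ 0) (hann : ∀ z : Z, z ∈ P₀ ↔ z • m₀ = 0) :
    IsAssocPrimeTSI (T ⊗[Z] M₀) P := by
  refine ⟨hP, Submodule.span T {(1:T) ⊗ₜ[Z] m₀}, ?_, ?_⟩
  · have h1 : (1:T) ⊗ₜ[Z] m₀ ≠ 0 := by
      intro h
      have h2 := congrArg (fun w => tEquiv Q hinj hcen M₀ w 0) h
      simp only [tEquiv_tmul_apply, Q.zBasis_repr_one hinj hcen, map_zero,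
        Finsupp.coe_zero, Pi.zero_apply, Finsupp.single_eq_same, one_smul] at h2
      exact hm0 h2
    intro h
    exact h1 ((Submodule.eq_bot_iff _).mp h _ (Submodule.mem_span_singleton_self _))
  · intro W hWle hWne r
    constructor
    · intro hr m hm
      obtain ⟨t, rfl⟩ := Submodule.mem_span_singleton.mp (hWle hm)
      have htm : t • ((1:T) ⊗ₜ[Z] m₀) = t ⊗ₜ[Z] m₀ := by
        rw [TensorProduct.smul_tmul', smul_eq_mul, mul_one]
      rw [htm]
      obtain ⟨F, g, hg, hreq⟩ := Q.ideal_decomp hcen (P : Set T) P.zero_mem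
        (fun {a b} ha hb => P.add_mem ha hb) (fun s {a} ha => P.mul_mem_left s a ha)
        (fun s {a} ha => P.mul_mem_right a s ha) hr
      rw [hreq, Finset.sum_smul]
      apply Finset.sum_eq_zero
      intro v hv
      rw [TensorProduct.smul_tmul', smul_eq_mul, mul_assoc, ← Algebra.smul_def,
        TensorProduct.smul_tmul, (hann _).mp ((hP₀ _).mpr (hg v hv)),
        TensorProduct.tmul_zero]
    · intro hkill
      set J : Set T := {r' : T | ∀ m ∈ W, r' • m = 0} with hJ
      have hJ0 : (0:T) ∈ J := fun m _ => zero_smul T m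
      have hJadd : ∀ {a b : T}, a ∈ J → b ∈ J → a + b ∈ J := fun {a b} ha hb m hm => by
        rw [add_smul, ha m hm, hb m hm, add_zero]
      have hJL : ∀ (s : T) {a : T}, a ∈ J → s * a ∈ J := fun s {a} ha m hm => by
        rw [mul_smul, ha m hm, smul_zero]
      have hJR : ∀ (s : T) {a : T}, a ∈ J → a * s ∈ J := fun s {a} ha m hm => by
        rw [mul_smul]
        exact ha _ (W.smul_mem s hm)
      obtain ⟨w₀, hw₀W, hw₀ne⟩ := (Submodule.ne_bot_iff W).mp hWne
      obtain ⟨t₀, ht₀⟩ := Submodule.mem_span_singleton.mp (hWle hw₀W)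
      have hw₀ : w₀ = t₀ ⊗ₜ[Z] m₀ := by
        rw [← ht₀, TensorProduct.smul_tmul', smul_eq_mul, mul_one]
      have hEw₀ : tEquiv Q hinj hcen M₀ w₀ ≠ 0 := fun h =>
        hw₀ne ((tEquiv Q hinj hcen M₀).map_eq_zero_iff.mp h)
      obtain ⟨v₀, hv₀⟩ : ∃ v₀, ((Q.zBasis hinj hcen).repr t₀ v₀) • m₀ ≠ 0 := by
        by_contra hcc
        push_neg at hcc
        apply hEw₀
        ext v
        rw [hw₀, tEquiv_tmul_apply, hcc v, Finsupp.coe_zero, Pi.zero_apply]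
      set c0 := (Q.zBasis hinj hcen).repr t₀ v₀ with hc0def
      have hc0 : c0 ∉ P₀ := fun h => hv₀ ((hann c0).mp h)
      obtain ⟨F, g, hg, hreq⟩ := Q.ideal_decomp hcen J hJ0 hJadd hJL hJR hkill
      rw [hreq]
      apply sum_mem
      intro v hv
      apply P.mul_mem_right
      refine (hP₀ _).mp ?_
      have hkillg : (g v) • w₀ = 0 := by
        rw [← algebraMap_smul_eq]
        exact hg v hv w₀ hw₀W
      have hco := congrArg (fun u => tEquiv Q hinj hcen M₀ u v₀) hkillg
      simp only [map_smul, Finsupp.smul_apply, map_zero, Finsupp.coe_zero,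
        Pi.zero_apply] at hco
      rw [hw₀, tEquiv_tmul_apply, ← hc0def] at hco
      have hmul : g v * c0 ∈ P₀ := (hann _).mpr (by rw [mul_smul]; exact hco)
      rcases mul_cases_P₀ hp₀ _ _ hmul with h | h
      · exact h
      · exact absurd h hc0

lemma b_iff_ann {P₀ : TwoSidedIdeal Z} (hp₀ : IsPrimeTSI P₀) :
    IsAssocPrimeTSI M₀ P₀ ↔
      ∃ m₀ : M₀, m₀ ≠ 0 ∧ ∀ z : Z, z ∈ P₀ ↔ z • m₀ = 0 := by
  constructor
  · rintro ⟨-, M₀', hne, hfaith⟩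
    obtain ⟨m, hmM, hm0⟩ := (Submodule.ne_bot_iff M₀').mp hne
    have hle : Submodule.span Z {m} ≤ M₀' :=
      (Submodule.span_le).mpr (Set.singleton_subset_iff.mpr hmM)
    have hne' : Submodule.span Z {m} ≠ ⊥ := fun h =>
      hm0 ((Submodule.eq_bot_iff _).mp h m (Submodule.mem_span_singleton_self m))
    have hiff := hfaith _ hle hne'
    refine ⟨m, hm0, fun z => ?_⟩
    rw [hiff z]
    constructor
    · intro h
      exact h m (Submodule.mem_span_singleton_self m)
    · intro h m' hm'
      obtain ⟨c, rfl⟩ := Submodule.mem_span_singleton.mp hm'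
      rw [smul_smul, mul_comm, ← smul_smul, h, smul_zero]
  · rintro ⟨m₀, hm0, hann⟩
    refine ⟨hp₀, Submodule.span Z {m₀}, ?_, ?_⟩
    · intro h
      exact hm0 ((Submodule.eq_bot_iff _).mp h m₀ (Submodule.mem_span_singleton_self m₀))
    · intro N hle hne r
      constructor
      · intro hr m hm
        obtain ⟨c, rfl⟩ := Submodule.mem_span_singleton.mp (hle hm)
        rw [smul_smul, mul_comm, ← smul_smul, (hann r).mp hr, smul_zero]
      · intro h
        obtain ⟨m, hmN, hm0'⟩ := (Submodule.ne_bot_iff N).mp hne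
        obtain ⟨c, hcm⟩ := Submodule.mem_span_singleton.mp (hle hmN)
        have hrc : (r * c) • m₀ = 0 := by
          rw [mul_smul, hcm]
          exact h m hmN
        rcases mul_cases_P₀ hp₀ _ _ ((hann _).mpr hrc) with hh | hh
        · exact hh
        · exact absurd (hcm ▸ ((hann c).mp hh) ▸ rfl : m = 0) hm0'

end MainAux2
/-- For a module `M₀` over the center `Z` of the quantum torus `T_q` and
`M = T_q ⊗_Z M₀`, a prime `P` of `T_q` with `P₀ = P ∩ Z`: `P` is an associated
prime of `M` iff `P₀` is an associated prime of `M₀` iff `P` is the annihilator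
of a cyclic submodule of `M`. -/
theorem assocPrime_tensor_center {K : Type} [Field K] {n : ℕ} {T : Type} [Ring T]
    [Algebra K T] (Q : QuantumTorus K n T)
    (Z : Type) [CommRing Z] [Algebra Z T]
    (hinj : Function.Injective (algebraMap Z T))
    (hcen : Set.range (algebraMap Z T) = Set.center T)
    (M₀ : Type) [AddCommGroup M₀] [Module Z M₀]
    (P : TwoSidedIdeal T) (hP : IsPrimeTSI P)
    (P₀ : TwoSidedIdeal Z) (hP₀ : ∀ z : Z, z ∈ P₀ ↔ algebraMap Z T z ∈ P) :
    (IsAssocPrimeTSI (T ⊗[Z] M₀) P ↔ IsAssocPrimeTSI M₀ P₀) ∧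
    (IsAssocPrimeTSI (T ⊗[Z] M₀) P ↔
      ∃ a : T ⊗[Z] M₀, ∀ r : T, r ∈ P ↔ ∀ s : T, r • s • a = 0) := by
  have hp₀ : IsPrimeTSI P₀ := prime_P₀ hcen hP hP₀
  have hab : IsAssocPrimeTSI (T ⊗[Z] M₀) P → IsAssocPrimeTSI M₀ P₀ := by
    intro ha
    obtain ⟨u, hu0, hu⟩ := ann_from_assoc Q hinj hcen hP₀ ha
    obtain ⟨m₀, hm0, hann⟩ := exists_ann_eq Q hinj hcen hp₀ hu0 hu
    exact (b_iff_ann hp₀).mpr ⟨m₀, hm0, hann⟩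
  have hba : IsAssocPrimeTSI M₀ P₀ → IsAssocPrimeTSI (T ⊗[Z] M₀) P := by
    intro hb
    obtain ⟨m₀, hm0, hann⟩ := (b_iff_ann hp₀).mp hb
    exact assoc_of_ann Q hinj hcen hP hP₀ hp₀ hm0 hann
  refine ⟨⟨hab, hba⟩, ⟨?_, ?_⟩⟩
  · rintro ⟨-, M', hne, hfaith⟩
    obtain ⟨u, huM, hu0⟩ := (Submodule.ne_bot_iff M').mp hne
    have hle : Submodule.span T {u} ≤ M' :=
      (Submodule.span_le).mpr (Set.singleton_subset_iff.mpr huM)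
    have hne' : Submodule.span T {u} ≠ ⊥ := fun h =>
      hu0 ((Submodule.eq_bot_iff _).mp h u (Submodule.mem_span_singleton_self u))
    refine ⟨u, fun r => ?_⟩
    rw [hfaith _ hle hne' r]
    constructor
    · intro h s
      exact h _ (Submodule.smul_mem _ s (Submodule.mem_span_singleton_self u))
    · intro h m hm
      obtain ⟨s, rfl⟩ := Submodule.mem_span_singleton.mp hm
      exact h s
  · rintro ⟨a, ha⟩
    obtain ⟨u, hu0, hu⟩ := ann_from_c Q hinj hcen hP hP₀ ha
    obtain ⟨m₀, hm0, hann⟩ := exists_ann_eq Q hinj hcen hp₀ hu0 hu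
    exact assoc_of_ann Q hinj hcen hP hP₀ hp₀ hm0 hann
end

section
/- Every proper binomial ideal J of the quantum torus T_q has a generating set consisting of elements of the form x^{γ_s} − ν_s with γ_s ∈ Γ_Z and ν_s ∈ K^×; in particular, every generator exponent lies in the central lattice Γ_Z. -/
namespace QuantumTorus

variable {K : Type} [Field K] {n : ℕ} {T : Type} [Ring T] [Algebra K T]

lemma smul_mem' (J : TwoSidedIdeal T) (c : K) {t : T} (h : t ∈ J) : c • t ∈ J := by
  rw [Algebra.smul_def]; exact J.mul_mem_left _ _ h

lemma x_mem_top (Q : QuantumTorus K n T) {J : TwoSidedIdeal T} {μ : Fin n → ℤ}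
    (h : Q.x μ ∈ J) : J = ⊤ := by
  have h1 : ((Q.d (-μ) μ : K)) • (1 : T) ∈ J := by
    have := J.mul_mem_left (Q.x (-μ)) _ h
    rwa [Q.x_mul, neg_add_cancel, Q.x_zero] at this
  have h2 := smul_mem' J ((Q.d (-μ) μ : K))⁻¹ h1
  rw [smul_smul, inv_mul_cancel₀ (Units.ne_zero _), one_smul] at h2
  exact J.eq_top h2

lemma central_of_d (Q : QuantumTorus K n T) {γ : Fin n → ℤ}
    (h : ∀ δ, (Q.d γ δ : K) = Q.d δ γ) : Q.IsCentral γ := by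
  intro t
  have hlin : (LinearMap.mulLeft K (Q.x γ)) = (LinearMap.mulRight K (Q.x γ)) := by
    apply Q.basis.ext
    intro δ
    simp only [LinearMap.mulLeft_apply, LinearMap.mulRight_apply, Q.basis_eq, Q.x_mul]
    rw [h δ, add_comm]
  exact DFunLike.congr_fun hlin t

lemma central_of_mem (Q : QuantumTorus K n T) {J : TwoSidedIdeal T} (hJ : J ≠ ⊤)
    {γ : Fin n → ℤ} {ν : K} (hg : Q.x γ - ν • (1 : T) ∈ J) : Q.IsCentral γ := by
  by_contra hc
  have hd : ∃ δ, (Q.d γ δ : K) ≠ Q.d δ γ := by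
    by_contra hd
    push_neg at hd
    exact hc (Q.central_of_d hd)
  obtain ⟨δ, hδ⟩ := hd
  set g : T := Q.x γ - ν • (1 : T) with hgdef
  have hcomm : Q.x δ * g - g * Q.x δ = (((Q.d δ γ : K)) - ((Q.d γ δ : K))) • Q.x (γ + δ) := by
    rw [hgdef, mul_sub, sub_mul, mul_smul_comm, smul_mul_assoc, mul_one, one_mul,
      Q.x_mul, Q.x_mul, add_comm δ γ, sub_smul]
    abel
  have hmem : (((Q.d δ γ : K)) - ((Q.d γ δ : K))) • Q.x (γ + δ) ∈ J := by
    rw [← hcomm]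
    exact J.sub_mem (J.mul_mem_left _ _ hg) (J.mul_mem_right _ _ hg)
  have hne : (((Q.d δ γ : K)) - ((Q.d γ δ : K))) ≠ 0 := sub_ne_zero.2 (Ne.symm hδ)
  have := smul_mem' J (((Q.d δ γ : K)) - ((Q.d γ δ : K)))⁻¹ hmem
  rw [smul_smul, inv_mul_cancel₀ hne, one_smul] at this
  exact hJ (Q.x_mem_top this)

end QuantumTorus

/-- Every proper binomial ideal of the quantum torus has a generating set of
binomials `x^γ - ν` with `γ` in the central lattice and `ν ∈ Kˣ`. -/
theorem binomial_ideal_generators {K : Type} [Field K] {n : ℕ} {T : Type} [Ring T]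
    [Algebra K T] (Q : QuantumTorus K n T) (J : TwoSidedIdeal T)
    (hJtop : J ≠ ⊤) (hJ : Q.IsBinomialIdeal J) :
    ∃ S : Set T, J = TwoSidedIdeal.span S ∧
      ∀ t ∈ S, ∃ (γ : Fin n → ℤ) (ν : Kˣ),
        Q.IsCentral γ ∧ t = Q.x γ - ((ν : K)) • (1 : T) := by
    classical
  obtain ⟨S, hS, hJS⟩ := hJ
  set S' : Set T := {t | t ∈ J ∧ ∃ (γ : Fin n → ℤ) (ν : Kˣ),
    Q.IsCentral γ ∧ t = Q.x γ - ((ν : K)) • (1 : T)} with hS'def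
  refine ⟨S', le_antisymm ?_ ?_, fun t ht => ht.2⟩
  · -- J ≤ span S'
    rw [hJS]
    intro z hz
    refine TwoSidedIdeal.mem_span_iff.mp hz _ ?_
    intro b hb
    rw [SetLike.mem_coe]
    obtain ⟨hbne, l, m, α, β, hbeq⟩ := hS b hb
    have hbJ : b ∈ J := hJS ▸ TwoSidedIdeal.subset_span hb
    by_cases hl : l = 0
    · exfalso
      have hm : m ≠ 0 := by
        rintro rfl
        rw [hl, zero_smul, zero_smul, add_zero] at hbeq
        exact hbne hbeq
      have hx : Q.x β ∈ J := by
        have := QuantumTorus.smul_mem' J m⁻¹ hbJ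
        rwa [hbeq, hl, zero_smul, zero_add, smul_smul, inv_mul_cancel₀ hm, one_smul] at this
      exact hJtop (Q.x_mem_top hx)
    by_cases hm : m = 0
    · exfalso
      have hx : Q.x α ∈ J := by
        have := QuantumTorus.smul_mem' J l⁻¹ hbJ
        rwa [hbeq, hm, zero_smul, add_zero, smul_smul, inv_mul_cancel₀ hl, one_smul] at this
      exact hJtop (Q.x_mem_top hx)
    -- main case: both coefficients are nonzero
    set γ : Fin n → ℤ := α + -β with hγdef
    set u : K := l * ((Q.d α (-β) : K)) with hudef
    set w : K := m * ((Q.d β (-β) : K)) with hwdef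
    have hu : u ≠ 0 := mul_ne_zero hl (Units.ne_zero _)
    have hw : w ≠ 0 := mul_ne_zero hm (Units.ne_zero _)
    set ν : K := -(u⁻¹ * w) with hνdef
    have hν : ν ≠ 0 := neg_ne_zero.2 (mul_ne_zero (inv_ne_zero hu) hw)
    have key : b * Q.x (-β) = u • Q.x γ + w • (1 : T) := by
      rw [hbeq, add_mul, smul_mul_assoc, smul_mul_assoc, Q.x_mul, Q.x_mul,
        add_neg_cancel, Q.x_zero, smul_smul, smul_smul]
    have h2 : u⁻¹ • (b * Q.x (-β)) = Q.x γ - ν • (1 : T) := by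
      rw [key, smul_add, smul_smul, inv_mul_cancel₀ hu, one_smul, smul_smul,
        hνdef, neg_smul, sub_neg_eq_add]
    have hgJ : Q.x γ - ν • (1 : T) ∈ J := by
      rw [← h2]
      exact QuantumTorus.smul_mem' J _ (J.mul_mem_right _ _ hbJ)
    have hcent : Q.IsCentral γ := Q.central_of_mem hJtop hgJ
    have gmem : (Q.x γ - ν • (1 : T)) ∈ S' :=
      ⟨hgJ, γ, Units.mk0 ν hν, hcent, by simp⟩
    have hbspan : b = (u • (Q.x γ - ν • (1 : T))) *
        (((Q.d (-β) β : K))⁻¹ • Q.x β) := by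
      have h3 : u • (Q.x γ - ν • (1 : T)) = b * Q.x (-β) := by
        rw [← h2, smul_smul, mul_inv_cancel₀ hu, one_smul]
      rw [h3, mul_smul_comm, mul_assoc, Q.x_mul, neg_add_cancel, Q.x_zero,
        mul_smul_comm, mul_one, smul_smul, inv_mul_cancel₀ (Units.ne_zero _), one_smul]
    rw [hbspan]
    exact (TwoSidedIdeal.span S').mul_mem_right _ _
      (QuantumTorus.smul_mem' _ _ (TwoSidedIdeal.subset_span gmem))
  · -- span S' ≤ J
    intro z hz
    exact TwoSidedIdeal.mem_span_iff.mp hz J fun t ht => ht.1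
end

section
/- For a sublattice L of Γ_Z and a group homomorphism ρ : L → K^×, the ideal I(L,ρ) = ⟨x^α − c(α)^{-1}ρ(α) | α ∈ L⟩ is a proper binomial ideal of the quantum torus T_q. -/
section Aux

variable {K : Type} [Field K] {n : ℕ} {T : Type} [Ring T] [Algebra K T]

namespace QTAux

lemma smul_cancel (Q : QuantumTorus K n T) {γ : Fin n → ℤ} {k k' : K}
    (h : k • Q.x γ = k' • Q.x γ) : k = k' := by
  have h2 := congrArg (fun t => Q.basis.repr t γ) h
  simpa only [← Q.basis_eq, map_smul, Module.Basis.repr_self, Finsupp.smul_apply,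
    Finsupp.single_eq_same, smul_eq_mul, mul_one] using h2

lemma d_add_left (Q : QuantumTorus K n T) (α β γ : Fin n → ℤ) :
    Q.d (α + β) γ = Q.d α γ * Q.d β γ := by
  rw [Q.d_eq, Q.d_eq, Q.d_eq, ← Finset.prod_mul_distrib]
  refine Finset.prod_congr rfl fun i _ => ?_
  rw [← Finset.prod_mul_distrib]
  refine Finset.prod_congr rfl fun j _ => ?_
  split_ifs with h
  · rw [Pi.add_apply, add_mul, zpow_add]
  · rw [mul_one]

lemma d_add_right (Q : QuantumTorus K n T) (α β γ : Fin n → ℤ) :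
    Q.d α (β + γ) = Q.d α β * Q.d α γ := by
  rw [Q.d_eq, Q.d_eq, Q.d_eq, ← Finset.prod_mul_distrib]
  refine Finset.prod_congr rfl fun i _ => ?_
  rw [← Finset.prod_mul_distrib]
  refine Finset.prod_congr rfl fun j _ => ?_
  split_ifs with h
  · rw [Pi.add_apply, mul_add, zpow_add]
  · rw [mul_one]

lemma c_mul (Q : QuantumTorus K n T) (c : (Fin n → ℤ) → Kˣ) (hc : Q.IsGoodC c)
    {α β : Fin n → ℤ} (hα : Q.IsCentral α) (hβ : Q.IsCentral β) :
    c (α + β) = c α * c β * Q.d α β := by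
  have h := hc.2 α β hα hβ
  rw [smul_mul_assoc, mul_smul_comm, Q.x_mul, smul_smul, smul_smul] at h
  have h2 := smul_cancel Q h
  refine Units.ext ?_
  rw [← h2, Units.val_mul, Units.val_mul]
  try ring

variable (Q : QuantumTorus K n T) (c : (Fin n → ℤ) → Kˣ)
variable (L : AddSubgroup (Fin n → ℤ)) (ρ : L →+ Additive Kˣ)

noncomputable def rep (β : Fin n → ℤ) : Fin n → ℤ :=
  Quotient.out (QuotientAddGroup.mk (s := L) β)

lemma sub_rep_mem (β : Fin n → ℤ) : β - rep L β ∈ L := by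
  have h : (QuotientAddGroup.mk (rep L β) : (Fin n → ℤ) ⧸ L) = QuotientAddGroup.mk β :=
    Quotient.out_eq _
  rw [QuotientAddGroup.eq] at h
  have e : β - rep L β = -rep L β + β := by abel
  rwa [e]

lemma rep_add (β : Fin n → ℤ) {α : Fin n → ℤ} (hα : α ∈ L) :
    rep L (β + α) = rep L β := by
  unfold rep
  congr 1
  rw [QuotientAddGroup.eq]
  have e : -(β + α) + β = -α := by abel
  rw [e]
  exact neg_mem hα

def lam {L : AddSubgroup (Fin n → ℤ)} (c : (Fin n → ℤ) → Kˣ) (ρ : L →+ Additive Kˣ)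
    (α : L) : Kˣ := (c (α : Fin n → ℤ))⁻¹ * Additive.toMul (ρ α)

noncomputable def mu (β : Fin n → ℤ) : Kˣ :=
  lam c ρ ⟨β - rep L β, sub_rep_mem L β⟩ * (Q.d (rep L β) (β - rep L β))⁻¹

lemma mu_spec (β r : Fin n → ℤ) (h : β - r ∈ L) (hr : rep L β = r) :
    mu Q c L ρ β = lam c ρ ⟨β - r, h⟩ * (Q.d r (β - r))⁻¹ := by
  subst hr; rfl

lemma lam_add (hc : Q.IsGoodC c) (hL : ∀ α ∈ L, Q.IsCentral α) (s t : L) :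
    lam c ρ (s + t) = lam c ρ s * lam c ρ t *
      (Q.d (s : Fin n → ℤ) (t : Fin n → ℤ))⁻¹ := by
  unfold lam
  have hco : ((s + t : L) : Fin n → ℤ) = (s : Fin n → ℤ) + (t : Fin n → ℤ) := rfl
  rw [map_add, toMul_add, hco, c_mul Q c hc (hL _ s.2) (hL _ t.2)]
  refine Units.ext ?_
  have h1 : ((c (s : Fin n → ℤ) : Kˣ) : K) ≠ 0 := Units.ne_zero _
  have h2 : ((c (t : Fin n → ℤ) : Kˣ) : K) ≠ 0 := Units.ne_zero _
  have h3 : ((Q.d (s : Fin n → ℤ) (t : Fin n → ℤ) : Kˣ) : K) ≠ 0 := Units.ne_zero _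
  simp only [Units.val_mul, Units.val_inv_eq_inv_val]
  field_simp
  try ring

lemma key (hc : Q.IsGoodC c) (hL : ∀ α ∈ L, Q.IsCentral α) (β : Fin n → ℤ)
    {α : Fin n → ℤ} (hα : α ∈ L) :
    Q.d β α * mu Q c L ρ (β + α) = lam c ρ ⟨α, hα⟩ * mu Q c L ρ β := by
  have hmem : β - rep L β ∈ L := sub_rep_mem L β
  have hmem' : β + α - rep L β ∈ L := by
    have e : β + α - rep L β = (β - rep L β) + α := by abel
    rw [e]; exact add_mem hmem hα
  rw [mu_spec Q c L ρ (β + α) (rep L β) hmem' (rep_add L β hα),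
      mu_spec Q c L ρ β (rep L β) hmem rfl]
  have hsub : (⟨β + α - rep L β, hmem'⟩ : L) = ⟨β - rep L β, hmem⟩ + ⟨α, hα⟩ := by
    apply Subtype.ext
    show β + α - rep L β = (β - rep L β) + α
    abel
  have e1 : Q.d β α = Q.d (rep L β) α * Q.d (β - rep L β) α := by
    rw [← d_add_left]
    congr 1
    abel
  have e2 : Q.d (rep L β) (β + α - rep L β) =
      Q.d (rep L β) (β - rep L β) * Q.d (rep L β) α := by
    rw [← d_add_right]
    congr 1
    abel
  rw [hsub, lam_add Q c L ρ hc hL, e1, e2]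
  refine Units.ext ?_
  have h1 : ((Q.d (rep L β) α : Kˣ) : K) ≠ 0 := Units.ne_zero _
  have h2 : ((Q.d (β - rep L β) α : Kˣ) : K) ≠ 0 := Units.ne_zero _
  have h3 : ((Q.d (rep L β) (β - rep L β) : Kˣ) : K) ≠ 0 := Units.ne_zero _
  simp only [Units.val_mul, Units.val_inv_eq_inv_val]
  field_simp
  try ring

noncomputable def f : T →ₗ[K] K :=
  Q.basis.constr K fun γ => ((mu Q c L ρ γ : Kˣ) : K)

lemma f_x (γ : Fin n → ℤ) : f Q c L ρ (Q.x γ) = ((mu Q c L ρ γ : Kˣ) : K) := by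
  rw [← Q.basis_eq]
  exact Q.basis.constr_basis K _ γ

lemma f_mul_gen (hc : Q.IsGoodC c) (hL : ∀ α ∈ L, Q.IsCentral α) {α : Fin n → ℤ}
    (hα : α ∈ L) (t : T) :
    f Q c L ρ (t * (Q.x α - ((lam c ρ ⟨α, hα⟩ : Kˣ) : K) • 1)) = 0 := by
  have h : (f Q c L ρ).comp
      (LinearMap.mulRight K (Q.x α - ((lam c ρ ⟨α, hα⟩ : Kˣ) : K) • 1)) = 0 := by
    refine Q.basis.ext fun β => ?_
    simp only [LinearMap.comp_apply, LinearMap.mulRight_apply, LinearMap.zero_apply]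
    rw [Q.basis_eq, mul_sub, mul_smul_comm, mul_one, Q.x_mul, map_sub, map_smul,
      map_smul, f_x, f_x, smul_eq_mul, smul_eq_mul]
    have hK : (Q.d β α : K) * ((mu Q c L ρ (β + α) : Kˣ) : K) =
        ((lam c ρ ⟨α, hα⟩ : Kˣ) : K) * ((mu Q c L ρ β : Kˣ) : K) := by
      exact_mod_cast congrArg Units.val (key Q c L ρ hc hL β hα)
    rw [hK, sub_self]
  simpa using LinearMap.ext_iff.mp h t

end QTAux

end Aux

/-- For a sublattice `L ≤ Γ_Z` and `ρ ∈ Hom(L, Kˣ)`, the ideal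
`I(L,ρ) = ⟨x^α - c(α)⁻¹ ρ(α) : α ∈ L⟩` is a proper binomial ideal of `T_q`. -/
theorem binIdeal_proper_binomial {K : Type} [Field K] {n : ℕ} {T : Type} [Ring T]
    [Algebra K T] (Q : QuantumTorus K n T) (c : (Fin n → ℤ) → Kˣ) (hc : Q.IsGoodC c)
    (L : AddSubgroup (Fin n → ℤ)) (hL : ∀ α ∈ L, Q.IsCentral α)
    (ρ : L →+ Additive Kˣ) :
    Q.binIdeal c L ρ ≠ ⊤ ∧ Q.IsBinomialIdeal (Q.binIdeal c L ρ) := by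
  constructor
  · -- properness
    intro htop
    let P : TwoSidedIdeal T := TwoSidedIdeal.mk'
      {t : T | ∀ u v : T, QTAux.f Q c L ρ (u * t * v) = 0}
      (fun u v => by rw [mul_zero, zero_mul, map_zero])
      (fun {x y} hx hy u v => by rw [mul_add, add_mul, map_add, hx, hy, add_zero])
      (fun {x} hx u v => by rw [mul_neg, neg_mul, map_neg, hx, neg_zero])
      (fun {x y} hy u v => by rw [← mul_assoc u x y]; exact hy (u * x) v)
      (fun {x y} hx u v => by
        rw [← mul_assoc u x y, mul_assoc (u * x) y v]; exact hx u (y * v))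
    have hsub : {t : T | ∃ α : L, t = Q.x (α : Fin n → ℤ) -
        ((((c (α : Fin n → ℤ))⁻¹ * Additive.toMul (ρ α) : Kˣ) : K)) • (1 : T)} ⊆ P := by
      rintro t ⟨α, rfl⟩
      rw [SetLike.mem_coe, TwoSidedIdeal.mem_mk']
      intro u v
      set g : T := Q.x (α : Fin n → ℤ) -
        ((((c (α : Fin n → ℤ))⁻¹ * Additive.toMul (ρ α) : Kˣ) : K)) • (1 : T) with hg
      have hcen : g * v = v * g := by
        rw [hg, sub_mul, mul_sub, hL _ α.2 v, smul_mul_assoc, one_mul,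
          mul_smul_comm, mul_one]
      rw [mul_assoc, hcen, ← mul_assoc]
      exact QTAux.f_mul_gen Q c L ρ hc hL α.2 (u * v)
    have h1 : (1 : T) ∈ Q.binIdeal c L ρ := by rw [htop]; exact TwoSidedIdeal.mem_top _
    have h2 : (1 : T) ∈ P := TwoSidedIdeal.mem_span_iff.mp h1 P hsub
    rw [TwoSidedIdeal.mem_mk'] at h2
    have h3 := h2 1 1
    rw [mul_one, one_mul, ← Q.x_zero, QTAux.f_x] at h3
    exact Units.ne_zero _ h3
  · -- binomiality
    refine ⟨{t : T | (∃ α : L, t = Q.x (α : Fin n → ℤ) -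
        ((((c (α : Fin n → ℤ))⁻¹ * Additive.toMul (ρ α) : Kˣ) : K)) • (1 : T)) ∧ t ≠ 0},
        ?_, ?_⟩
    · rintro b ⟨⟨α, rfl⟩, hb⟩
      refine ⟨hb, 1, -((((c (α : Fin n → ℤ))⁻¹ * Additive.toMul (ρ α) : Kˣ) : K)),
        (α : Fin n → ℤ), 0, ?_⟩
      rw [Q.x_zero, one_smul, neg_smul, ← sub_eq_add_neg]
    · refine le_antisymm ?_ ?_
      · intro t ht
        refine TwoSidedIdeal.mem_span_iff.mp ht _ ?_
        rintro b ⟨α, rfl⟩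
        by_cases h0 : Q.x (α : Fin n → ℤ) -
            ((((c (α : Fin n → ℤ))⁻¹ * Additive.toMul (ρ α) : Kˣ) : K)) • (1 : T) = 0
        · rw [SetLike.mem_coe, h0]; exact zero_mem _
        · exact TwoSidedIdeal.subset_span ⟨⟨α, rfl⟩, h0⟩
      · intro t ht
        refine TwoSidedIdeal.mem_span_iff.mp ht _ ?_
        rintro b ⟨⟨α, rfl⟩, _⟩
        exact TwoSidedIdeal.subset_span ⟨α, rfl⟩
end

section
/- If B is a binomial ideal of the quantum affine space A_q, then the relation α ∼ β ⟺ K·(x^α + B) = K·(x^β + B) is a monoid congruence on (ℤ_{≥0})^n, and A_q/B = ⊕_{s ∈ S} R_s is a grading by the quotient monoid S = (ℤ_{≥0})^n/∼, where R_s = K·(x^α + B) for any α ∈ s. Moreover, if B contains no monomials, then A_q/B is a twisted semigroup algebra K^e S. -/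
/-- A quantum affine space `O_q(Kⁿ)`: an algebra `A` with basis
`(x^α)_{α ∈ ℕⁿ}` and multiplication `x^α x^β = d(α,β) x^{α+β}` where
`d(α,β) = ∏_{i>j} q_{ij}^{α_i β_j}` for a multiplicatively skew-symmetric
matrix `q`. -/
structure QuantumAffine (K : Type) [Field K] (n : ℕ) (A : Type) [Ring A] [Algebra K A] where
  q : Fin n → Fin n → Kˣ
  q_diag : ∀ i, q i i = 1
  q_skew : ∀ i j, q j i = (q i j)⁻¹
  d : (Fin n → ℕ) → (Fin n → ℕ) → Kˣ
  d_eq : ∀ α β, d α β = ∏ i : Fin n, ∏ j : Fin n,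
      if (j : ℕ) < (i : ℕ) then q i j ^ (α i * β j) else 1
  x : (Fin n → ℕ) → A
  basis : Module.Basis (Fin n → ℕ) K A
  basis_eq : ∀ α, basis α = x α
  x_mul : ∀ α β, x α * x β = ((d α β : K)) • x (α + β)
  x_zero : x 0 = 1

namespace QuantumAffine

variable {K : Type} [Field K] {n : ℕ} {A : Type} [Ring A] [Algebra K A]

/-- A binomial ideal of a quantum affine space: a two-sided ideal generated by
nonzero elements `λ x^α + μ x^β` with `α, β ∈ ℕⁿ`. -/
def IsBinomialIdeal (Q : QuantumAffine K n A) (B : TwoSidedIdeal A) : Prop :=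
  ∃ S : Set A,
    (∀ b ∈ S, b ≠ 0 ∧ ∃ (l m : K) (α β : Fin n → ℕ), b = l • Q.x α + m • Q.x β) ∧
    B = TwoSidedIdeal.span S

/-- The relation `α ∼ β ⟺ K·(x^α + B) = K·(x^β + B)` on `ℕⁿ`. -/
def rel (Q : QuantumAffine K n A) (B : TwoSidedIdeal A) (α β : Fin n → ℕ) : Prop :=
  (Q.x α ∈ B ∧ Q.x β ∈ B) ∨ ∃ lam : Kˣ, Q.x α - ((lam : K)) • Q.x β ∈ B

end QuantumAffine

namespace QuantumAffine

variable {K : Type} [Field K] {n : ℕ} {A : Type} [Ring A] [Algebra K A]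

section Aux

variable (Q : QuantumAffine K n A) (B : TwoSidedIdeal A)

lemma tsi_smul_mem {c : K} {a : A} (h : a ∈ B) : c • a ∈ B := by
  rw [Algebra.smul_def]; exact B.mul_mem_left _ _ h

lemma tsi_unit_smul_mem_iff (c : Kˣ) {a : A} : (c : K) • a ∈ B ↔ a ∈ B := by
  constructor
  · intro h
    have := tsi_smul_mem B (c := ((c⁻¹ : Kˣ) : K)) h
    rwa [smul_smul, Units.inv_mul, one_smul] at this
  · exact tsi_smul_mem B

lemma x_add_mem {α : Fin n → ℕ} (h : Q.x α ∈ B) (γ : Fin n → ℕ) : Q.x (α + γ) ∈ B := by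
  have h2 := B.mul_mem_right _ (Q.x γ) h
  rw [Q.x_mul] at h2
  exact (tsi_unit_smul_mem_iff B (Q.d α γ)).1 h2

lemma rel_refl (α : Fin n → ℕ) : Q.rel B α α :=
  Or.inr ⟨1, by simp [B.zero_mem]⟩

lemma rel_symm {α β : Fin n → ℕ} (h : Q.rel B α β) : Q.rel B β α := by
  rcases h with ⟨h1, h2⟩ | ⟨lam, h⟩
  · exact Or.inl ⟨h2, h1⟩
  · refine Or.inr ⟨lam⁻¹, ?_⟩
    have := tsi_smul_mem B (c := -((lam⁻¹ : Kˣ) : K)) h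
    have hne : (lam : K) ≠ 0 := lam.ne_zero
    have e : (-((lam⁻¹ : Kˣ) : K)) • (Q.x α - (lam : K) • Q.x β)
        = Q.x β - ((lam⁻¹ : Kˣ) : K) • Q.x α := by
      push_cast
      match_scalars <;> field_simp <;> ring
    rwa [e] at this

lemma mem_of_rel_unit {α β : Fin n → ℕ} {lam : Kˣ}
    (h : Q.x α - (lam : K) • Q.x β ∈ B) (hβ : Q.x β ∈ B) : Q.x α ∈ B := by
  have := B.add_mem h (tsi_smul_mem B (c := (lam : K)) hβ)
  rwa [sub_add_cancel] at this

lemma mem_of_rel_unit' {α β : Fin n → ℕ} {lam : Kˣ}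
    (h : Q.x α - (lam : K) • Q.x β ∈ B) (hα : Q.x α ∈ B) : Q.x β ∈ B := by
  have h2 := B.sub_mem hα h
  rw [sub_sub_cancel] at h2
  exact (tsi_unit_smul_mem_iff B lam).1 h2

lemma rel_trans {α β γ : Fin n → ℕ} (h1 : Q.rel B α β) (h2 : Q.rel B β γ) :
    Q.rel B α γ := by
  rcases h1 with ⟨ha, hb⟩ | ⟨lam, h1⟩
  · rcases h2 with ⟨_, hc⟩ | ⟨mu, h2⟩
    · exact Or.inl ⟨ha, hc⟩
    · exact Or.inl ⟨ha, mem_of_rel_unit' Q B h2 hb⟩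
  · rcases h2 with ⟨hb, hc⟩ | ⟨mu, h2⟩
    · exact Or.inl ⟨mem_of_rel_unit Q B h1 hb, hc⟩
    · refine Or.inr ⟨lam * mu, ?_⟩
      have := B.add_mem h1 (tsi_smul_mem B (c := (lam : K)) h2)
      have e : Q.x α - (lam : K) • Q.x β + (lam : K) • (Q.x β - (mu : K) • Q.x γ)
          = Q.x α - ((lam * mu : Kˣ) : K) • Q.x γ := by
        push_cast
        match_scalars <;> ring
      rwa [e] at this

lemma rel_add {α β : Fin n → ℕ} (γ : Fin n → ℕ) (h : Q.rel B α β) :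
    Q.rel B (α + γ) (β + γ) := by
  rcases h with ⟨h1, h2⟩ | ⟨lam, h⟩
  · exact Or.inl ⟨x_add_mem Q B h1 γ, x_add_mem Q B h2 γ⟩
  · refine Or.inr ⟨(Q.d α γ)⁻¹ * lam * Q.d β γ, ?_⟩
    have h2 := B.mul_mem_right _ (Q.x γ) h
    rw [sub_mul, smul_mul_assoc, Q.x_mul, Q.x_mul, smul_smul] at h2
    have h3 := tsi_smul_mem B (c := (((Q.d α γ)⁻¹ : Kˣ) : K)) h2
    have e : (((Q.d α γ)⁻¹ : Kˣ) : K) • ((Q.d α γ : K) • Q.x (α + γ)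
        - ((lam : K) * (Q.d β γ : K)) • Q.x (β + γ))
        = Q.x (α + γ) - (((Q.d α γ)⁻¹ * lam * Q.d β γ : Kˣ) : K) • Q.x (β + γ) := by
      have hne : ((Q.d α γ) : K) ≠ 0 := (Q.d α γ).ne_zero
      push_cast
      match_scalars <;> field_simp <;> ring
    rwa [e] at h3

end Aux

section Aux2

variable (Q : QuantumAffine K n A) (B : TwoSidedIdeal A)

lemma x_mul_bin (γ α β : Fin n → ℕ) (lam : Kˣ) :
    Q.x γ * (Q.x α - (lam : K) • Q.x β)
      = (Q.d γ α : K) • (Q.x (γ + α)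
          - (((Q.d γ α)⁻¹ * lam * Q.d γ β : Kˣ) : K) • Q.x (γ + β)) := by
  rw [mul_sub, mul_smul_comm, Q.x_mul, Q.x_mul]
  have hne : ((Q.d γ α) : K) ≠ 0 := (Q.d γ α).ne_zero
  push_cast
  match_scalars <;> field_simp <;> ring

lemma bin_mul_x (γ α β : Fin n → ℕ) (lam : Kˣ) :
    (Q.x α - (lam : K) • Q.x β) * Q.x γ
      = (Q.d α γ : K) • (Q.x (α + γ)
          - (((Q.d α γ)⁻¹ * lam * Q.d β γ : Kˣ) : K) • Q.x (β + γ)) := by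
  rw [sub_mul, smul_mul_assoc, Q.x_mul, Q.x_mul]
  have hne : ((Q.d α γ) : K) ≠ 0 := (Q.d α γ).ne_zero
  push_cast
  match_scalars <;> field_simp <;> ring

lemma mem_span_monBin (hB : Q.IsBinomialIdeal B) {a : A} (ha : a ∈ B) :
    a ∈ Submodule.span K ({b | ∃ γ, b = Q.x γ ∧ b ∈ B} ∪
      {b | ∃ α, ∃ β, ∃ lam : Kˣ, b = Q.x α - (lam : K) • Q.x β ∧ b ∈ B}) := by
  set V := Submodule.span K ({b | ∃ γ, b = Q.x γ ∧ b ∈ B} ∪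
      {b | ∃ α, ∃ β, ∃ lam : Kˣ, b = Q.x α - (lam : K) • Q.x β ∧ b ∈ B}) with hV
  have hxrange : ∀ c : A, c ∈ Submodule.span K (Set.range Q.x) := by
    have hco : ⇑Q.basis = Q.x := funext Q.basis_eq
    intro c
    rw [← hco, Q.basis.span_eq]
    trivial
  -- multiplication by a monomial preserves V
  have hgenleft : ∀ γ v, v ∈ V → Q.x γ * v ∈ V := by
    intro γ v hv
    induction hv using Submodule.span_induction with
    | mem w hw =>
      rcases hw with ⟨μ, rfl, hmem⟩ | ⟨α, β, lam, rfl, hmem⟩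
      · have h1 := B.mul_mem_left (Q.x γ) _ hmem
        rw [Q.x_mul] at h1
        have h2 := (tsi_unit_smul_mem_iff B (Q.d γ μ)).1 h1
        rw [Q.x_mul]
        exact V.smul_mem _ (Submodule.subset_span (Set.mem_union_left _ ⟨γ + μ, rfl, h2⟩))
      · have h1 := B.mul_mem_left (Q.x γ) _ hmem
        rw [x_mul_bin] at h1
        have h2 := (tsi_unit_smul_mem_iff B (Q.d γ α)).1 h1
        rw [x_mul_bin]
        exact V.smul_mem _ (Submodule.subset_span (Set.mem_union_right _
          ⟨γ + α, γ + β, _, rfl, h2⟩))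
    | zero => rw [mul_zero]; exact V.zero_mem
    | add a b _ _ ha hb => rw [mul_add]; exact V.add_mem ha hb
    | smul c a _ h => rw [mul_smul_comm]; exact V.smul_mem _ h
  have hgenright : ∀ γ v, v ∈ V → v * Q.x γ ∈ V := by
    intro γ v hv
    induction hv using Submodule.span_induction with
    | mem w hw =>
      rcases hw with ⟨μ, rfl, hmem⟩ | ⟨α, β, lam, rfl, hmem⟩
      · have h1 := B.mul_mem_right _ (Q.x γ) hmem
        rw [Q.x_mul] at h1
        have h2 := (tsi_unit_smul_mem_iff B (Q.d μ γ)).1 h1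
        rw [Q.x_mul]
        exact V.smul_mem _ (Submodule.subset_span (Set.mem_union_left _ ⟨μ + γ, rfl, h2⟩))
      · have h1 := B.mul_mem_right _ (Q.x γ) hmem
        rw [bin_mul_x] at h1
        have h2 := (tsi_unit_smul_mem_iff B (Q.d α γ)).1 h1
        rw [bin_mul_x]
        exact V.smul_mem _ (Submodule.subset_span (Set.mem_union_right _
          ⟨α + γ, β + γ, _, rfl, h2⟩))
    | zero => rw [zero_mul]; exact V.zero_mem
    | add a b _ _ ha hb => rw [add_mul]; exact V.add_mem ha hb
    | smul c a _ h => rw [smul_mul_assoc]; exact V.smul_mem _ h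
  have hleft : ∀ (c : A) {v : A}, v ∈ V → c * v ∈ V := by
    intro c v hv
    have hc := hxrange c
    induction hc using Submodule.span_induction with
    | mem w hw => obtain ⟨γ, rfl⟩ := hw; exact hgenleft γ v hv
    | zero => rw [zero_mul]; exact V.zero_mem
    | add a b _ _ ha hb => rw [add_mul]; exact V.add_mem ha hb
    | smul k a _ h => rw [smul_mul_assoc]; exact V.smul_mem _ h
  have hright : ∀ (c : A) {v : A}, v ∈ V → v * c ∈ V := by
    intro c v hv
    have hc := hxrange c
    induction hc using Submodule.span_induction with
    | mem w hw => obtain ⟨γ, rfl⟩ := hw; exact hgenright γ v hv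
    | zero => rw [mul_zero]; exact V.zero_mem
    | add a b _ _ ha hb => rw [mul_add]; exact V.add_mem ha hb
    | smul k a _ h => rw [mul_smul_comm]; exact V.smul_mem _ h
  obtain ⟨S, hS, hBS⟩ := hB
  let I : TwoSidedIdeal A := TwoSidedIdeal.mk' V V.zero_mem
    (fun h1 h2 => V.add_mem h1 h2) (fun h => V.neg_mem h)
    (fun h => hleft _ h) (fun h => hright _ h)
  have hmemI : ∀ b : A, b ∈ I ↔ b ∈ V := fun b =>
    TwoSidedIdeal.mem_mk' _ _ _ _ _ _ b
  have hSI : S ⊆ I := by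
    intro b hb
    obtain ⟨hbne, l, m, α, β, rfl⟩ := hS b hb
    have hbB : l • Q.x α + m • Q.x β ∈ B := by
      rw [hBS]; exact TwoSidedIdeal.subset_span hb
    rw [SetLike.mem_coe, hmemI]
    by_cases hl : l = 0
    · subst hl
      rw [zero_smul, zero_add] at hbB hbne ⊢
      have hm : m ≠ 0 := fun h => hbne (by rw [h, zero_smul])
      have hxβ : Q.x β ∈ B := (tsi_unit_smul_mem_iff B (Units.mk0 m hm)).1 hbB
      exact V.smul_mem _ (Submodule.subset_span (Set.mem_union_left _ ⟨β, rfl, hxβ⟩))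
    · by_cases hm : m = 0
      · subst hm
        rw [zero_smul, add_zero] at hbB hbne ⊢
        have hxα : Q.x α ∈ B := (tsi_unit_smul_mem_iff B (Units.mk0 l hl)).1 hbB
        exact V.smul_mem _ (Submodule.subset_span (Set.mem_union_left _ ⟨α, rfl, hxα⟩))
      · have hml : -(m / l) ≠ 0 := by
          simp [hl, hm]
        set lam : Kˣ := Units.mk0 (-(m / l)) hml with hlam
        have hid : l • Q.x α + m • Q.x β = l • (Q.x α - (lam : K) • Q.x β) := by
          rw [hlam, Units.val_mk0]
          push_cast
          match_scalars <;> field_simp <;> ring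
        have hwB : Q.x α - (lam : K) • Q.x β ∈ B := by
          have h2 := tsi_smul_mem B (c := l⁻¹) hbB
          rw [hid, smul_smul, inv_mul_cancel₀ hl, one_smul] at h2
          exact h2
        rw [hid]
        exact V.smul_mem _ (Submodule.subset_span (Set.mem_union_right _
          ⟨α, β, lam, rfl, hwB⟩))
  have := TwoSidedIdeal.mem_span_iff.1 (by rw [hBS] at ha; exact ha) I hSI
  rwa [hmemI] at this


end Aux2

end QuantumAffine


/-- For a binomial ideal `B` of the quantum affine space `A_q`, the relation
`α ∼ β ⟺ K·(x^α+B) = K·(x^β+B)` is a monoid congruence on `ℕⁿ`, and `A_q/B`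
(represented by any surjection `ψ` with kernel `B`) is graded by the quotient
monoid, with components the lines `K·ψ(x^{σ s})` for a choice `σ` of class
representatives; if `B` contains no monomials, `A_q/B` is a twisted semigroup
algebra. -/
theorem quotient_binomial_graded {K : Type} [Field K] {n : ℕ} {A : Type} [Ring A]
    [Algebra K A] (Q : QuantumAffine K n A) (B : TwoSidedIdeal A)
    (hB : Q.IsBinomialIdeal B) :
    Equivalence (Q.rel B) ∧
    (∀ α β γ : Fin n → ℕ, Q.rel B α β → Q.rel B (α + γ) (β + γ)) ∧
    ∀ (R : Type) [Ring R] [Algebra K R] (ψ : A →ₐ[K] R),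
      Function.Surjective ψ → (∀ a : A, ψ a = 0 ↔ a ∈ B) →
      ∀ σ : (Fin n → ℕ) → (Fin n → ℕ),
        (∀ α, Q.rel B α (σ α)) → (∀ α β, (Q.rel B α β ↔ σ α = σ β)) →
        iSupIndep (fun s : Set.range σ => Submodule.span K {ψ (Q.x (s : Fin n → ℕ))}) ∧
        (⨆ s : Set.range σ, Submodule.span K {ψ (Q.x (s : Fin n → ℕ))}) = ⊤ ∧
        (∀ α β : Fin n → ℕ, ∀ a ∈ Submodule.span K {ψ (Q.x (σ α))},
          ∀ b ∈ Submodule.span K {ψ (Q.x (σ β))},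
            a * b ∈ Submodule.span K {ψ (Q.x (σ (α + β)))}) ∧
        ((∀ γ : Fin n → ℕ, Q.x γ ∉ B) →
          (∃ bas : Module.Basis (Set.range σ) K R, ∀ s, bas s = ψ (Q.x (s : Fin n → ℕ))) ∧
          ∃ e : (Fin n → ℕ) → (Fin n → ℕ) → Kˣ,
            ∀ α β, ψ (Q.x (σ α)) * ψ (Q.x (σ β)) =
              ((e α β : K)) • ψ (Q.x (σ (α + β)))) := by
  open QuantumAffine in
  refine ⟨⟨fun α => rel_refl Q B α, fun h => rel_symm Q B h,
    fun h1 h2 => rel_trans Q B h1 h2⟩, fun α β γ h => rel_add Q B γ h, ?_⟩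
  intro R _ _ ψ hsurj hker σ hσ1 hσ2
  have hσidem : ∀ α, σ (σ α) = σ α := fun α => ((hσ2 α (σ α)).1 (hσ1 α)).symm
  have hσrange : ∀ s : Set.range σ, σ (s : Fin n → ℕ) = s := by
    rintro ⟨_, α, rfl⟩; exact hσidem α
  have hcex : ∀ α : Fin n → ℕ, ∃ c : K, (Q.x α ∈ B → c = 0) ∧
      (Q.x α ∉ B → c ≠ 0 ∧ Q.x α - c • Q.x (σ α) ∈ B) := by
    intro α
    by_cases h : Q.x α ∈ B
    · exact ⟨0, fun _ => rfl, fun h' => absurd h h'⟩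
    · rcases hσ1 α with ⟨h1, _⟩ | ⟨lam, hlam⟩
      · exact absurd h1 h
      · exact ⟨lam, fun h' => absurd h' h, fun _ => ⟨lam.ne_zero, hlam⟩⟩
  choose c hc0 hc1 using hcex
  have hxσ : ∀ α, Q.x α ∉ B → Q.x (σ α) ∉ B := by
    intro α h hσB
    obtain ⟨hcne, hmem⟩ := hc1 α h
    refine h ?_
    have h2 := B.add_mem hmem (tsi_smul_mem B (c := c α) hσB)
    rwa [sub_add_cancel] at h2
  set f : (Fin n → ℕ) → A →ₗ[K] K := fun τ =>
    Q.basis.constr K (fun α => if σ α = τ then c α else 0) with hf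
  have hfx : ∀ τ α, f τ (Q.x α) = if σ α = τ then c α else 0 := by
    intro τ α
    rw [hf, ← Q.basis_eq]
    exact Q.basis.constr_basis K _ α
  have hfB : ∀ τ, ∀ a ∈ B, f τ a = 0 := by
    intro τ a ha
    have hsp := Q.mem_span_monBin B hB ha
    clear ha
    induction hsp using Submodule.span_induction with
    | mem w hw =>
      rcases hw with ⟨γ, rfl, hmem⟩ | ⟨α, β, lam, rfl, hmem⟩
      · rw [hfx]
        split <;> simp [hc0 γ hmem]
      · rw [map_sub, map_smul, hfx, hfx, smul_eq_mul]
        by_cases hα : Q.x α ∈ B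
        · have hβ : Q.x β ∈ B := mem_of_rel_unit' Q B hmem hα
          simp [hc0 α hα, hc0 β hβ]
        · have hβ : Q.x β ∉ B := fun hβ' => hα (mem_of_rel_unit Q B hmem hβ')
          have hσαβ : σ α = σ β := (hσ2 α β).1 (Or.inr ⟨lam, hmem⟩)
          by_cases hτ : σ α = τ
          · rw [if_pos hτ, if_pos (hσαβ ▸ hτ)]
            obtain ⟨hcα, hmα⟩ := hc1 α hα
            obtain ⟨hcβ, hmβ⟩ := hc1 β hβ
            rw [← hσαβ] at hmβ
            have key : (c α - (lam : K) * c β) • Q.x (σ α) ∈ B := by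
              have h3 := B.add_mem (B.sub_mem hmem hmα)
                (tsi_smul_mem B (c := (lam : K)) hmβ)
              have e : Q.x α - (lam : K) • Q.x β - (Q.x α - c α • Q.x (σ α))
                  + (lam : K) • (Q.x β - c β • Q.x (σ α))
                  = (c α - (lam : K) * c β) • Q.x (σ α) := by
                match_scalars <;> ring
              rwa [e] at h3
            by_contra hne
            have hne' : c α - (lam : K) * c β ≠ 0 := fun h' => hne (by
              rw [sub_eq_zero] at h'; rw [h', sub_self])
            exact hxσ α hα
              ((tsi_unit_smul_mem_iff B (Units.mk0 _ hne')).1 key)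
          · rw [if_neg hτ, if_neg (hσαβ ▸ hτ), mul_zero, sub_zero]
    | zero => exact map_zero _
    | add u v _ _ ihu ihv => rw [map_add, ihu, ihv, add_zero]
    | smul k u _ ih => rw [map_smul, ih, smul_zero]
  have hψsurj : Function.Surjective ψ.toLinearMap := hsurj
  have hkerle : ∀ τ, LinearMap.ker ψ.toLinearMap ≤ LinearMap.ker (f τ) := by
    intro τ a ha
    rw [LinearMap.mem_ker] at ha ⊢
    exact hfB τ a ((hker a).1 ha)
  set eqv := LinearMap.quotKerEquivOfSurjective ψ.toLinearMap hψsurj with heqv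
  set g : (Fin n → ℕ) → R →ₗ[K] K := fun τ =>
    (Submodule.liftQ _ (f τ) (hkerle τ)).comp eqv.symm.toLinearMap with hg
  have hgψ : ∀ τ a, g τ (ψ a) = f τ a := by
    intro τ a
    have he : eqv.symm (ψ a) = Submodule.Quotient.mk a := by
      apply eqv.injective
      rw [LinearEquiv.apply_symm_apply]
      show ψ a = eqv (Submodule.Quotient.mk a)
      simp [heqv, LinearMap.quotKerEquivOfSurjective]
    simp only [hg, LinearMap.comp_apply, LinearEquiv.coe_toLinearMap, he,
      Submodule.liftQ_apply]
  have hgx : ∀ τ α, g τ (ψ (Q.x α)) = if σ α = τ then c α else 0 := fun τ α => by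
    rw [hgψ, hfx]
  have hψ0 : ∀ α, Q.x α ∈ B → ψ (Q.x α) = 0 := fun α h => (hker _).2 h
  have hψx : ∀ α, Q.x α ∉ B → ψ (Q.x α) = c α • ψ (Q.x (σ α)) := by
    intro α h
    obtain ⟨_, hm⟩ := hc1 α h
    have h2 := (hker _).2 hm
    rwa [map_sub, map_smul, sub_eq_zero] at h2
  have part1 : iSupIndep (fun s : Set.range σ =>
      Submodule.span K {ψ (Q.x (s : Fin n → ℕ))}) := by
    rw [iSupIndep_def]
    intro t
    by_cases ht : Q.x (t : Fin n → ℕ) ∈ B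
    · rw [hψ0 _ ht, Submodule.span_zero_singleton]
      exact disjoint_bot_left
    · rw [Submodule.disjoint_def]
      intro a hat hasup
      rw [Submodule.mem_span_singleton] at hat
      obtain ⟨k, rfl⟩ := hat
      have hsub : (⨆ s, ⨆ (_ : s ≠ t),
          Submodule.span K {ψ (Q.x (s : Fin n → ℕ))}) ≤ LinearMap.ker (g t) := by
        refine iSup_le fun s => iSup_le fun hst => ?_
        rw [Submodule.span_le, Set.singleton_subset_iff, SetLike.mem_coe,
          LinearMap.mem_ker, hgx, if_neg]
        intro hst'
        exact hst (Subtype.ext (by rw [← hσrange s, hst']))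
      have h0 := hsub hasup
      rw [LinearMap.mem_ker, map_smul, hgx, if_pos (hσrange t), smul_eq_mul] at h0
      obtain ⟨hcne, _⟩ := hc1 _ ht
      rcases mul_eq_zero.1 h0 with rfl | h0'
      · rw [zero_smul]
      · exact absurd h0' hcne
  have part2 : (⨆ s : Set.range σ,
      Submodule.span K {ψ (Q.x (s : Fin n → ℕ))}) = ⊤ := by
    rw [eq_top_iff]
    have h1 : Submodule.span K (Set.range Q.x) = ⊤ := by
      have hco : ⇑Q.basis = Q.x := funext Q.basis_eq
      rw [← hco, Q.basis.span_eq]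
    have h2 : (⊤ : Submodule K R) = Submodule.map ψ.toLinearMap ⊤ := by
      rw [Submodule.map_top, LinearMap.range_eq_top.2 hψsurj]
    rw [h2, ← h1, Submodule.map_span, Submodule.span_le]
    rintro r ⟨a, ⟨α, rfl⟩, rfl⟩
    rw [SetLike.mem_coe, AlgHom.toLinearMap_apply]
    by_cases h : Q.x α ∈ B
    · rw [hψ0 α h]; exact Submodule.zero_mem _
    · rw [hψx α h]
      have hle := le_iSup (fun s : Set.range σ =>
        Submodule.span K {ψ (Q.x (s : Fin n → ℕ))}) ⟨σ α, Set.mem_range_self α⟩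
      exact Submodule.smul_mem _ _ (hle (Submodule.mem_span_singleton_self _))
  have hrelsum : ∀ α β : Fin n → ℕ, σ (σ α + σ β) = σ (α + β) := by
    intro α β
    have h1 : Q.rel B (α + β) (σ α + β) := rel_add Q B β (hσ1 α)
    have h2 : Q.rel B (σ α + β) (σ α + σ β) := by
      have h := rel_add Q B (σ α) (hσ1 β)
      rwa [add_comm β (σ α), add_comm (σ β) (σ α)] at h
    exact (hσ2 _ _).1 (rel_symm Q B (rel_trans Q B h1 h2))
  have part3 : ∀ α β : Fin n → ℕ, ∀ a ∈ Submodule.span K {ψ (Q.x (σ α))},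
      ∀ b ∈ Submodule.span K {ψ (Q.x (σ β))},
        a * b ∈ Submodule.span K {ψ (Q.x (σ (α + β)))} := by
    intro α β a ha b hb
    rw [Submodule.mem_span_singleton] at ha hb
    obtain ⟨k, rfl⟩ := ha
    obtain ⟨k', rfl⟩ := hb
    have hmul : ψ (Q.x (σ α)) * ψ (Q.x (σ β))
        = (Q.d (σ α) (σ β) : K) • ψ (Q.x (σ α + σ β)) := by
      rw [← map_mul, Q.x_mul, map_smul]
    have hx2 : ψ (Q.x (σ α + σ β)) ∈ Submodule.span K {ψ (Q.x (σ (α + β)))} := by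
      by_cases h : Q.x (σ α + σ β) ∈ B
      · rw [hψ0 _ h]; exact Submodule.zero_mem _
      · rw [hψx _ h, hrelsum α β]
        exact Submodule.smul_mem _ _ (Submodule.mem_span_singleton_self _)
    rw [smul_mul_smul_comm, hmul, smul_smul]
    exact Submodule.smul_mem _ _ hx2
  refine ⟨part1, part2, part3, ?_⟩
  intro hnomon
  have hc : ∀ α, c α ≠ 0 ∧ Q.x α - c α • Q.x (σ α) ∈ B := fun α => hc1 α (hnomon α)
  constructor
  · have hli : LinearIndependent K
        (fun s : Set.range σ => ψ (Q.x (s : Fin n → ℕ))) := by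
      rw [linearIndependent_iff']
      intro t gcoef hsum i hi
      have h0 := congrArg (g (i : Fin n → ℕ)) hsum
      rw [map_sum, map_zero] at h0
      have hterm : ∀ j ∈ t, g (i : Fin n → ℕ) (gcoef j • ψ (Q.x (j : Fin n → ℕ)))
          = if j = i then gcoef j * c (i : Fin n → ℕ) else 0 := by
        intro j _
        rw [map_smul, hgx, smul_eq_mul]
        by_cases hji : j = i
        · subst hji
          rw [if_pos (hσrange j), if_pos rfl]
        · rw [if_neg (fun h => hji (Subtype.ext (by rw [← hσrange j, h]))),
            if_neg hji, mul_zero]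
      rw [Finset.sum_congr rfl hterm, Finset.sum_ite_eq' t i] at h0
      rw [if_pos hi] at h0
      exact (mul_eq_zero.1 h0).resolve_right (hc _).1
    have hsp : ⊤ ≤ Submodule.span K
        (Set.range fun s : Set.range σ => ψ (Q.x (s : Fin n → ℕ))) := by
      rw [Submodule.span_range_eq_iSup]
      exact part2.ge
    exact ⟨Module.Basis.mk hli hsp, fun s => Module.Basis.mk_apply hli hsp s⟩
  · have hex : ∀ α β : Fin n → ℕ, ∃ u : Kˣ,
        ψ (Q.x (σ α)) * ψ (Q.x (σ β)) = (u : K) • ψ (Q.x (σ (α + β))) := by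
      intro α β
      have hne := (hc (σ α + σ β)).1
      refine ⟨Q.d (σ α) (σ β) * Units.mk0 (c (σ α + σ β)) hne, ?_⟩
      rw [← map_mul, Q.x_mul, map_smul, hψx _ (hnomon _), hrelsum, smul_smul,
        Units.val_mul, Units.val_mk0]
    choose e he using hex
    exact ⟨e, he⟩
end
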